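/- arXiv:2506.09723 — 7 statements merged into one kernel-verified Lean document; each statement's English description precedes it below -/
import Mathlib

section
/- Let (g_n) be a sequence in SL(2,ℝ) and (v_n) a sequence in ℝ² such that (v_n) does not converge to 0. Suppose g_n → g in SL(2,ℝ) and v_n − g_n·v_n → 0 in ℝ². Then g is unipotent, i.e. (g − I)² = 0 (equivalently, det(I − g) = 0 and hence trace(g) = 2). -/
open Filter Topology

/-- `SL(2,ℝ)`. -/
abbrev SL2 := Matrix.SpecialLinearGroup (Fin 2) ℝ

/-- The topology on `SL(2,ℝ)` induced from the space of `2×2` real matrices. -/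
instance : TopologicalSpace SL2 :=
  TopologicalSpace.induced ((↑) : SL2 → Matrix (Fin 2) (Fin 2) ℝ) inferInstance

/-- If `(g_n)` is a sequence in `SL(2,ℝ)` and `(v_n)` a sequence in `ℝ²` not converging to `0`
such that `g_n → g` and `v_n − g_n·v_n → 0`, then `g` is unipotent: `(g − I)² = 0`. -/
theorem stmt_0 (g : ℕ → SL2) (v : ℕ → (Fin 2 → ℝ)) (glim : SL2)
    (hv : ¬ Tendsto v atTop (𝓝 0))
    (hg : Tendsto g atTop (𝓝 glim))
    (hvg : Tendsto (fun n => v n - ((g n : Matrix (Fin 2) (Fin 2) ℝ)).mulVec (v n))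
      atTop (𝓝 0)) :
    ((glim : Matrix (Fin 2) (Fin 2) ℝ) - 1) ^ 2 = 0 := by
  set A : Matrix (Fin 2) (Fin 2) ℝ := (glim : Matrix (Fin 2) (Fin 2) ℝ) with hA
  -- coerce the convergence of g to matrices
  have hg' : Tendsto (fun n => (g n : Matrix (Fin 2) (Fin 2) ℝ)) atTop (𝓝 A) := by
    rw [nhds_induced] at hg
    exact tendsto_comap_iff.mp hg
  -- extract ε and a subsequence with ‖v n‖ ≥ ε
  obtain ⟨ε, hε, hfreq⟩ : ∃ ε > 0, ∃ᶠ n in atTop, ε ≤ ‖v n‖ := by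
    by_contra h
    push_neg at h
    apply hv
    rw [NormedAddCommGroup.tendsto_nhds_zero]
    intro δ hδ
    have := h δ hδ
    exact this
  obtain ⟨φ, hφ, hφε⟩ := Filter.extraction_of_frequently_atTop hfreq
  set u : ℕ → (Fin 2 → ℝ) := fun n => v (φ n) with hu
  have hune : ∀ n, u n ≠ 0 := by
    intro n h0
    have h1 : ε ≤ ‖u n‖ := hφε n
    rw [h0, norm_zero] at h1
    linarith
  set w : ℕ → (Fin 2 → ℝ) := fun n => ‖u n‖⁻¹ • u n with hw
  have hwmem : ∀ n, w n ∈ Metric.sphere (0 : Fin 2 → ℝ) 1 := by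
    intro n
    simp only [Metric.mem_sphere, dist_zero_right, hw, norm_smul, norm_inv, norm_norm]
    exact inv_mul_cancel₀ (norm_ne_zero_iff.mpr (hune n))
  obtain ⟨wl, hwl, ψ, hψ, hψlim⟩ :=
    (isCompact_sphere (0 : Fin 2 → ℝ) 1).tendsto_subseq hwmem
  have hwlne : wl ≠ 0 := by
    intro h
    rw [h] at hwl
    simp at hwl
  -- the key limit: (1 - A) *ᵥ wl = 0
  have hd : Tendsto (fun n =>
      ((1 : Matrix (Fin 2) (Fin 2) ℝ) - (g (φ (ψ n)) : Matrix (Fin 2) (Fin 2) ℝ)).mulVec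
        (w (ψ n))) atTop (𝓝 0) := by
    apply squeeze_zero_norm (a := fun n =>
      ε⁻¹ * ‖v (φ (ψ n)) - ((g (φ (ψ n)) : Matrix (Fin 2) (Fin 2) ℝ)).mulVec (v (φ (ψ n)))‖)
    · intro n
      have hne := hune (ψ n)
      have heq : ((1 : Matrix (Fin 2) (Fin 2) ℝ) - (g (φ (ψ n)) : Matrix (Fin 2) (Fin 2) ℝ)).mulVec
          (w (ψ n)) = ‖u (ψ n)‖⁻¹ •
          (v (φ (ψ n)) - ((g (φ (ψ n)) : Matrix (Fin 2) (Fin 2) ℝ)).mulVec (v (φ (ψ n)))) := by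
        simp only [hw, Matrix.mulVec_smul, Matrix.sub_mulVec, Matrix.one_mulVec, hu]
      rw [heq, norm_smul, norm_inv, norm_norm]
      apply mul_le_mul_of_nonneg_right _ (norm_nonneg _)
      have h1 : ε ≤ ‖u (ψ n)‖ := hφε (ψ n)
      exact inv_anti₀ hε h1
    · have hsub : Tendsto (fun n =>
          v (φ (ψ n)) - ((g (φ (ψ n)) : Matrix (Fin 2) (Fin 2) ℝ)).mulVec (v (φ (ψ n))))
          atTop (𝓝 0) := hvg.comp ((hφ.comp hψ).tendsto_atTop)
      have := (tendsto_zero_iff_norm_tendsto_zero.mp hsub).const_mul ε⁻¹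
      simpa using this
  have hcont : Tendsto (fun n =>
      ((1 : Matrix (Fin 2) (Fin 2) ℝ) - (g (φ (ψ n)) : Matrix (Fin 2) (Fin 2) ℝ)).mulVec
        (w (ψ n))) atTop (𝓝 (((1 : Matrix (Fin 2) (Fin 2) ℝ) - A).mulVec wl)) := by
    have hM : Tendsto (fun n => (1 : Matrix (Fin 2) (Fin 2) ℝ) -
        (g (φ (ψ n)) : Matrix (Fin 2) (Fin 2) ℝ)) atTop (𝓝 (1 - A)) :=
      tendsto_const_nhds.sub (hg'.comp ((hφ.comp hψ).tendsto_atTop))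
    have hc : Continuous fun p : (Matrix (Fin 2) (Fin 2) ℝ) × (Fin 2 → ℝ) =>
        p.1.mulVec p.2 := continuous_fst.matrix_mulVec continuous_snd
    exact (hc.tendsto _).comp (hM.prodMk_nhds hψlim)
  have hker : ((1 : Matrix (Fin 2) (Fin 2) ℝ) - A).mulVec wl = 0 :=
    tendsto_nhds_unique hcont hd
  have hdet1 : ((1 : Matrix (Fin 2) (Fin 2) ℝ) - A).det = 0 :=
    Matrix.exists_mulVec_eq_zero_iff.mp ⟨wl, hwlne, hker⟩
  have hdetA : A.det = 1 := glim.prop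
  rw [Matrix.det_fin_two] at hdet1 hdetA
  norm_num [Matrix.one_apply] at hdet1
  have h2 : A 0 0 + A 1 1 = 2 := by linear_combination hdetA - hdet1
  ext i j
  fin_cases i <;> fin_cases j <;>
    norm_num [pow_two, Matrix.mul_apply, Fin.sum_univ_two, Matrix.one_apply]
  · linear_combination (A 0 0) * h2 - hdetA
  · linear_combination (A 0 1) * h2
  · linear_combination (A 1 0) * h2
  · linear_combination (A 1 1) * h2 - hdetA
end

section
/- Let (H_n) and H be closed subgroups of GL(d,ℝ) such that H_n converges to H in the Chabauty sense: (i) for every h ∈ H there exist h_n ∈ H_n with h_n → h, and (ii) for every strictly increasing sequence (k_n) and every x_n ∈ H_{k_n} with x_n → x, one has x ∈ H. Let 𝔥_n and 𝔥 be ℝ-linear subspaces of the d×d real matrices whose underlying sets are {X : ∀ t ∈ ℝ, exp(tX) ∈ H_n} and {X : ∀ t ∈ ℝ, exp(tX) ∈ H} respectively, and assume dim 𝔥_n = dim 𝔥 for all n. Then 𝔥_n converges to 𝔥 in the same Chabauty sense as subsets of the space of d×d real matrices. -/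
open Filter Topology NormedSpace

-- approximation lemma in an inner product space
lemma approx_lemma {E : Type*} [NormedAddCommGroup E] [InnerProductSpace ℝ E]
    [FiniteDimensional ℝ E]
    (S : ℕ → Submodule ℝ E) (T : Submodule ℝ E)
    (hS : ∀ n, Module.finrank ℝ (S n) = Module.finrank ℝ T)
    (hcl : ∀ k : ℕ → ℕ, StrictMono k → ∀ u : ℕ → E, (∀ n, u n ∈ S (k n)) →
      ∀ x : E, Tendsto u atTop (𝓝 x) → x ∈ T)
    (x : E) (hx : x ∈ T) :
    ∃ u : ℕ → E, (∀ n, u n ∈ S n) ∧ Tendsto u atTop (𝓝 x) := by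
  classical
  set r := Module.finrank ℝ T with hr
  -- orthonormal vectors spanning each S n
  have hB : ∀ n, ∃ b : Fin r → E, (∀ i, b i ∈ S n) ∧ Orthonormal ℝ b := by
    intro n
    let B := (stdOrthonormalBasis ℝ (S n)).reindex (finCongr (hS n))
    refine ⟨fun i => (B i : E), fun i => (B i).2, ?_⟩
    rw [orthonormal_iff_ite]
    intro i j
    rw [← Submodule.coe_inner]
    exact orthonormal_iff_ite.mp B.orthonormal i j
  choose b hbmem hborth using hB
  have key : Tendsto (fun n => Metric.infDist x (S n : Set E)) atTop (𝓝 0) := by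
    by_contra hcon
    rw [Metric.tendsto_atTop] at hcon
    push_neg at hcon
    obtain ⟨ε, hε, hfr⟩ := hcon
    have hfr' : ∃ᶠ n in atTop, ε ≤ Metric.infDist x (S n : Set E) := by
      rw [frequently_atTop]
      intro N
      obtain ⟨n, hn1, hn2⟩ := hfr N
      refine ⟨n, hn1, ?_⟩
      rw [Real.dist_0_eq_abs, abs_of_nonneg Metric.infDist_nonneg] at hn2
      exact hn2
    obtain ⟨k, hk, hkε⟩ := Filter.extraction_of_frequently_atTop hfr'
    -- compactness extraction
    have hcpt : IsCompact (Set.univ.pi fun _ : Fin r => Metric.closedBall (0 : E) 1) :=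
      isCompact_univ_pi fun _ => isCompact_closedBall 0 1
    have hmem : ∀ n, (fun i => b (k n) i) ∈
        (Set.univ.pi fun _ : Fin r => Metric.closedBall (0 : E) 1) := by
      intro n
      rw [Set.mem_univ_pi]
      intro i
      rw [Metric.mem_closedBall, dist_zero_right]
      exact le_of_eq ((hborth (k n)).1 i)
    obtain ⟨c, -, l, hl, hlt⟩ := hcpt.tendsto_subseq hmem
    have htends : ∀ i, Tendsto (fun n => b (k (l n)) i) atTop (𝓝 (c i)) := by
      intro i
      have := tendsto_pi_nhds.mp hlt i
      exact this
    have hcorth : Orthonormal ℝ c := by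
      rw [orthonormal_iff_ite]
      intro i j
      have h1 : Tendsto (fun n => (inner ℝ (b (k (l n)) i) (b (k (l n)) j) : ℝ))
          atTop (𝓝 (inner ℝ (c i) (c j))) := (htends i).inner (htends j)
      have h2 : (fun n => (inner ℝ (b (k (l n)) i) (b (k (l n)) j) : ℝ)) =
          fun _ => if i = j then (1:ℝ) else 0 := by
        funext n
        exact orthonormal_iff_ite.mp (hborth (k (l n))) i j
      rw [h2] at h1
      exact tendsto_nhds_unique h1 tendsto_const_nhds
    have hcT : ∀ i, c i ∈ T := by
      intro i
      exact hcl (k ∘ l) (hk.comp hl) (fun n => b (k (l n)) i)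
        (fun n => hbmem (k (l n)) i) (c i) (htends i)
    have hspan : Submodule.span ℝ (Set.range c) = T := by
      apply Submodule.eq_of_le_of_finrank_eq
      · rw [Submodule.span_le]
        rintro _ ⟨i, rfl⟩
        exact hcT i
      · rw [finrank_span_eq_card hcorth.linearIndependent, Fintype.card_fin]
    have hx' : x ∈ Submodule.span ℝ (Set.range c) := hspan ▸ hx
    obtain ⟨a, ha⟩ := (Submodule.mem_span_range_iff_exists_fun ℝ).mp hx'
    have hw : Tendsto (fun n => ∑ i, a i • b (k (l n)) i) atTop (𝓝 x) := by
      rw [← ha]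
      exact tendsto_finset_sum _ fun i _ => (htends i).const_smul (a i)
    have hwm : ∀ n, (∑ i, a i • b (k (l n)) i) ∈ S (k (l n)) := fun n =>
      Submodule.sum_mem _ fun i _ => Submodule.smul_mem _ _ (hbmem (k (l n)) i)
    have hinf : Tendsto (fun n => Metric.infDist x (S (k (l n)) : Set E)) atTop (𝓝 0) := by
      apply squeeze_zero (fun n => Metric.infDist_nonneg)
        (g := fun n => dist x (∑ i, a i • b (k (l n)) i))
      · intro n
        exact Metric.infDist_le_dist_of_mem (hwm n)
      · have := (tendsto_const_nhds (x := x) (f := atTop)).dist hw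
        simpa using this
    obtain ⟨n, hn⟩ := (hinf.eventually (gt_mem_nhds hε)).exists
    exact absurd (hkε (l n)) (not_le.mpr hn)
  -- choose near points
  have hne : ∀ n, ((S n : Set E)).Nonempty := fun n => ⟨0, (S n).zero_mem⟩
  have hlt : ∀ n : ℕ, Metric.infDist x (S n : Set E) <
      Metric.infDist x (S n : Set E) + 1 / (n + 1) := by
    intro n
    have : (0:ℝ) < 1 / (n+1) := by positivity
    linarith
  choose u hu hud using fun n => (Metric.infDist_lt_iff (hne n)).mp (hlt n)
  refine ⟨u, hu, ?_⟩
  rw [tendsto_iff_dist_tendsto_zero]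
  apply squeeze_zero (fun n => dist_nonneg)
    (g := fun n => Metric.infDist x (S n : Set E) + 1 / (n + 1))
  · intro n
    rw [dist_comm]
    exact le_of_lt (hud n)
  · have h0 : Tendsto (fun n : ℕ => 1 / ((n:ℝ) + 1)) atTop (𝓝 0) :=
      tendsto_one_div_add_atTop_nhds_zero_nat
    have := key.add h0
    simpa using this


section Main
variable (d : ℕ)

-- the "upper semicontinuity" part for the Lie algebras
lemma upper_part (d : ℕ)
    (H : ℕ → Subgroup (Matrix.GeneralLinearGroup (Fin d) ℝ))
    (Hlim : Subgroup (Matrix.GeneralLinearGroup (Fin d) ℝ))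
    (hconv2 : ∀ k : ℕ → ℕ, StrictMono k →
      ∀ u : ℕ → Matrix.GeneralLinearGroup (Fin d) ℝ, (∀ n, u n ∈ H (k n)) →
      ∀ x, Tendsto u atTop (𝓝 x) → x ∈ Hlim)
    (h : ℕ → Submodule ℝ (Matrix (Fin d) (Fin d) ℝ))
    (hlim : Submodule ℝ (Matrix (Fin d) (Fin d) ℝ))
    (hh : ∀ n, (h n : Set (Matrix (Fin d) (Fin d) ℝ)) =
      {X | ∀ t : ℝ, ∃ u ∈ H n, (u : Matrix (Fin d) (Fin d) ℝ) = NormedSpace.exp (t • X)})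
    (hhlim : (hlim : Set (Matrix (Fin d) (Fin d) ℝ)) =
      {X | ∀ t : ℝ, ∃ u ∈ Hlim, (u : Matrix (Fin d) (Fin d) ℝ) = NormedSpace.exp (t • X)}) :
    ∀ k : ℕ → ℕ, StrictMono k → ∀ u : ℕ → Matrix (Fin d) (Fin d) ℝ,
      (∀ n, u n ∈ h (k n)) → ∀ x, Tendsto u atTop (𝓝 x) → x ∈ hlim := by
  intro k hk u hu x hx
  have hmem : ∀ n X, X ∈ h n ↔ ∀ t : ℝ, ∃ g ∈ H n,
      (g : Matrix (Fin d) (Fin d) ℝ) = exp (t • X) := by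
    intro n X
    have := Set.ext_iff.mp (hh n) X
    exact this
  have hmeml : ∀ X, X ∈ hlim ↔ ∀ t : ℝ, ∃ g ∈ Hlim,
      (g : Matrix (Fin d) (Fin d) ℝ) = exp (t • X) := by
    intro X
    have := Set.ext_iff.mp hhlim X
    exact this
  rw [hmeml]
  intro t
  -- pick group elements
  have hg : ∀ n, ∃ g ∈ H (k n), (g : Matrix (Fin d) (Fin d) ℝ) = exp (t • u n) :=
    fun n => (hmem (k n) (u n)).mp (hu n) t
  choose g hgmem hgval using hg
  -- the limit unit
  have hUnit : IsUnit (exp (t • x)) := Matrix.isUnit_exp _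
  set U : Matrix.GeneralLinearGroup (Fin d) ℝ := hUnit.unit with hUdef
  have hUval : (U : Matrix (Fin d) (Fin d) ℝ) = exp (t • x) := hUnit.unit_spec
  -- continuity of exp
  have hexpc : Continuous (fun A : Matrix (Fin d) (Fin d) ℝ => exp A) := by
    letI : NormedRing (Matrix (Fin d) (Fin d) ℝ) := Matrix.linftyOpNormedRing
    letI : NormedAlgebra ℝ (Matrix (Fin d) (Fin d) ℝ) := Matrix.linftyOpNormedAlgebra
    letI : NormedAlgebra ℚ (Matrix (Fin d) (Fin d) ℝ) := NormedAlgebra.restrictScalars ℚ ℝ _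
    exact exp_continuous
  have hval : Tendsto (fun n => ((g n : Matrix (Fin d) (Fin d) ℝ)))
      atTop (𝓝 (U : Matrix (Fin d) (Fin d) ℝ)) := by
    rw [hUval]
    simp only [hgval]
    exact (hexpc.tendsto _).comp (hx.const_smul t)
  have hinvval : Tendsto (fun n => (((g n)⁻¹ : Matrix.GeneralLinearGroup (Fin d) ℝ) :
      Matrix (Fin d) (Fin d) ℝ)) atTop (𝓝 ((U⁻¹ : Matrix.GeneralLinearGroup (Fin d) ℝ) :
      Matrix (Fin d) (Fin d) ℝ)) := by
    have h1 : ∀ n, ((g n)⁻¹ : Matrix.GeneralLinearGroup (Fin d) ℝ) =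
        (exp (-(t • u n)) : Matrix (Fin d) (Fin d) ℝ) := by
      intro n
      rw [Matrix.exp_neg, ← hgval n, ← Matrix.coe_units_inv]
    have h2 : ((U⁻¹ : Matrix.GeneralLinearGroup (Fin d) ℝ) : Matrix (Fin d) (Fin d) ℝ) =
        exp (-(t • x)) := by
      rw [Matrix.exp_neg, ← hUval, ← Matrix.coe_units_inv]
    rw [h2]
    simp only [h1]
    exact (hexpc.tendsto _).comp ((hx.const_smul t).neg)
  -- convergence in GL
  have hGL : Tendsto g atTop (𝓝 U) := by
    rw [Units.isInducing_embedProduct.tendsto_nhds_iff]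
    exact (hval.prodMk_nhds (MulOpposite.continuous_op.tendsto _ |>.comp hinvval))
  have hUmem : U ∈ Hlim := hconv2 k hk g hgmem U hGL
  exact ⟨U, hUmem, hUval⟩

end Main


open Filter Topology

/-- Chabauty convergence of a sequence of subsets of a topological space. -/
def ChabautyTendsto {X : Type*} [TopologicalSpace X] (S : ℕ → Set X) (T : Set X) : Prop :=
  (∀ h ∈ T, ∃ u : ℕ → X, (∀ n, u n ∈ S n) ∧ Tendsto u atTop (𝓝 h)) ∧
  (∀ k : ℕ → ℕ, StrictMono k → ∀ u : ℕ → X, (∀ n, u n ∈ S (k n)) →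
    ∀ x : X, Tendsto u atTop (𝓝 x) → x ∈ T)

/-- If closed subgroups `H_n` of `GL(d,ℝ)` converge to a closed subgroup `H` in the Chabauty
sense, and their Lie algebras `𝔥_n = {X : ∀ t, exp(tX) ∈ H_n}` all have the same dimension as
the Lie algebra `𝔥` of `H`, then `𝔥_n → 𝔥` in the Chabauty sense in the d×d matrices. -/
theorem stmt_4 (d : ℕ)
    (H : ℕ → Subgroup (Matrix.GeneralLinearGroup (Fin d) ℝ))
    (Hlim : Subgroup (Matrix.GeneralLinearGroup (Fin d) ℝ))
    (hHcl : ∀ n, IsClosed ((H n : Set (Matrix.GeneralLinearGroup (Fin d) ℝ))))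
    (hHlimcl : IsClosed ((Hlim : Set (Matrix.GeneralLinearGroup (Fin d) ℝ))))
    (hconv : ChabautyTendsto (fun n => (H n : Set (Matrix.GeneralLinearGroup (Fin d) ℝ)))
      (Hlim : Set (Matrix.GeneralLinearGroup (Fin d) ℝ)))
    (h : ℕ → Submodule ℝ (Matrix (Fin d) (Fin d) ℝ))
    (hlim : Submodule ℝ (Matrix (Fin d) (Fin d) ℝ))
    (hh : ∀ n, (h n : Set (Matrix (Fin d) (Fin d) ℝ)) =
      {X | ∀ t : ℝ, ∃ u ∈ H n, (u : Matrix (Fin d) (Fin d) ℝ) = NormedSpace.exp (t • X)})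
    (hhlim : (hlim : Set (Matrix (Fin d) (Fin d) ℝ)) =
      {X | ∀ t : ℝ, ∃ u ∈ Hlim, (u : Matrix (Fin d) (Fin d) ℝ) = NormedSpace.exp (t • X)})
    (hdim : ∀ n, Module.finrank ℝ (h n) = Module.finrank ℝ hlim) :
    ChabautyTendsto (fun n => (h n : Set (Matrix (Fin d) (Fin d) ℝ)))
      (hlim : Set (Matrix (Fin d) (Fin d) ℝ)) := by
  have upper := upper_part d H Hlim hconv.2 h hlim hh hhlim
  constructor
  · -- lower part: every element of hlim is approximated
    intro x hx
    letI : NormedAddCommGroup (Matrix (Fin d) (Fin d) ℝ) := Matrix.linftyOpNormedAddCommGroup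
    letI : NormedSpace ℝ (Matrix (Fin d) (Fin d) ℝ) := Matrix.linftyOpNormedSpace
    set e := toEuclidean (E := Matrix (Fin d) (Fin d) ℝ) with he
    have hmapmem : ∀ (p : Submodule ℝ (Matrix (Fin d) (Fin d) ℝ)) (y),
        y ∈ p.map (e.toLinearEquiv : Matrix (Fin d) (Fin d) ℝ →ₗ[ℝ] _) ↔ e.symm y ∈ p :=
      fun p y => p.mem_map_equiv
    obtain ⟨u', hu'mem, hu'⟩ := approx_lemma
      (fun n => (h n).map (e.toLinearEquiv : Matrix (Fin d) (Fin d) ℝ →ₗ[ℝ] _))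
      (hlim.map (e.toLinearEquiv : Matrix (Fin d) (Fin d) ℝ →ₗ[ℝ] _))
      (fun n => by
        rw [LinearEquiv.finrank_map_eq, LinearEquiv.finrank_map_eq]
        exact hdim n)
      (by
        intro k hk u hu y hy
        rw [hmapmem]
        refine upper k hk (fun n => e.symm (u n)) (fun n => (hmapmem _ _).mp (hu n))
          (e.symm y) ?_
        exact ((e.symm.continuous.tendsto _).comp hy))
      (e x)
      (by
        rw [hmapmem]
        simpa using hx)
    refine ⟨fun n => e.symm (u' n), fun n => (hmapmem _ _).mp (hu'mem n), ?_⟩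
    have := (e.symm.continuous.tendsto _).comp hu'
    simpa [Function.comp_def] using this
  · exact upper
end

section
/- Let L = SL(2,ℝ) × {0} ⊆ G and let (x_n) be a sequence in G such that the conjugates x_n L x_n⁻¹ converge in the Chabauty sense to a closed subgroup H of G. Then there exists x ∈ G such that either H = x L x⁻¹, or H = x (N⁺ ⋉ ℝ²) x⁻¹, where N⁺ ⋉ ℝ² = {((1, s; 0, 1), v) : s ∈ ℝ, v ∈ ℝ²}. -/
open Filter Topology

noncomputable section

/-- The underlying type of the group `G = SL(2,ℝ) ⋉ ℝ²`, with the product topology. -/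
abbrev GG := SL2 × (Fin 2 → ℝ)

/-- Multiplication in `G`: `(g,v)(g',v') = (gg', v + g·v')`. -/
def gmul (x y : GG) : GG := (x.1 * y.1, x.2 + (x.1 : Matrix (Fin 2) (Fin 2) ℝ).mulVec y.2)

/-- The identity element of `G`. -/
def gone : GG := (1, 0)

/-- Inversion in `G`. -/
def ginv (x : GG) : GG := (x.1⁻¹, -((x.1⁻¹ : SL2) : Matrix (Fin 2) (Fin 2) ℝ).mulVec x.2)

/-- The conjugate `x H x⁻¹` of a subset `H ⊆ G` by `x ∈ G`. -/
def conjSet (x : GG) (H : Set GG) : Set GG := (fun h => gmul (gmul x h) (ginv x)) '' H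

/-- `H` is a closed subgroup of `G`. -/
def IsClosedSubgroup (H : Set GG) : Prop :=
  IsClosed H ∧ gone ∈ H ∧ (∀ a ∈ H, ∀ b ∈ H, gmul a b ∈ H) ∧ (∀ a ∈ H, ginv a ∈ H)

/-- The Levi subgroup `L = SL(2,ℝ) × {0}`. -/
def Lset : Set GG := {x | x.2 = 0}

/-- The subgroup `N⁺ ⋉ ℝ² = {((1,s;0,1), v) : s ∈ ℝ, v ∈ ℝ²}`. -/
def NplusR2 : Set GG := {x | ∃ s : ℝ, (x.1 : Matrix (Fin 2) (Fin 2) ℝ) = !![1, s; 0, 1]}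

/-- The maximal compact subgroup `K = SO(2,ℝ) × {0}`. -/
def Kset : Set GG :=
  {x | ∃ θ : ℝ, (x.1 : Matrix (Fin 2) (Fin 2) ℝ) =
      !![Real.cos θ, Real.sin θ; -Real.sin θ, Real.cos θ] ∧ x.2 = 0}

/-- `V_c = {(I,(t,ct)) : t ∈ ℝ}`. -/
def Vc (c : ℝ) : Set GG := {x | ∃ t : ℝ, x.1 = 1 ∧ x.2 = ![t, c * t]}

/-- `V_∞ = {(I,(0,t)) : t ∈ ℝ}`. -/
def Vinf : Set GG := {x | ∃ t : ℝ, x.1 = 1 ∧ x.2 = ![0, t]}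

/-- `Ñ⁺ = {(±(1,s;0,1), 0) : s ∈ ℝ}`. -/
def Ntilde : Set GG :=
  {x | (∃ s : ℝ, (x.1 : Matrix (Fin 2) (Fin 2) ℝ) = !![1, s; 0, 1] ∨
      (x.1 : Matrix (Fin 2) (Fin 2) ℝ) = -!![1, s; 0, 1]) ∧ x.2 = 0}

/-- The diagonal subgroup `A = {(diag(a,1/a), 0) : a > 0}`. -/
def Aset : Set GG :=
  {x | ∃ a : ℝ, 0 < a ∧ (x.1 : Matrix (Fin 2) (Fin 2) ℝ) = !![a, 0; 0, a⁻¹] ∧ x.2 = 0}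

/-- `V_{(a,b,c)} = {((1,at;0,1), (ct + abt²/2, bt)) : t ∈ ℝ}`. -/
def Vabc (a b c : ℝ) : Set GG :=
  {x | ∃ t : ℝ, (x.1 : Matrix (Fin 2) (Fin 2) ℝ) = !![1, a * t; 0, 1] ∧
      x.2 = ![c * t + a * b * t ^ 2 / 2, b * t]}

/-- The upper triangular Borel subgroup `B` of `SL(2,ℝ)`, inside `G`. -/
def Bset : Set GG :=
  {x | ∃ a s : ℝ, a ≠ 0 ∧ (x.1 : Matrix (Fin 2) (Fin 2) ℝ) = !![a, s; 0, a⁻¹] ∧ x.2 = 0}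

/-- `W = {((1,s;0,1), (t,0)) : s, t ∈ ℝ} = N⁺ ⋉ {(t,0)}`. -/
def Wset : Set GG :=
  {x | ∃ s t : ℝ, (x.1 : Matrix (Fin 2) (Fin 2) ℝ) = !![1, s; 0, 1] ∧ x.2 = ![t, 0]}

/-- The Borel subgroup `P = B ⋉ ℝ²` of `G`. -/
def Pset : Set GG :=
  {x | ∃ a s : ℝ, a ≠ 0 ∧ (x.1 : Matrix (Fin 2) (Fin 2) ℝ) = !![a, s; 0, a⁻¹]}

/-- The translation subgroup `ℝ² = {(I,v) : v ∈ ℝ²}`. -/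
def R2set : Set GG := {x | x.1 = 1}

/-- The unipotent subgroup `N⁺ = {((1,s;0,1), 0) : s ∈ ℝ}`. -/
def Nplus : Set GG := {x | ∃ s : ℝ, (x.1 : Matrix (Fin 2) (Fin 2) ℝ) = !![1, s; 0, 1] ∧ x.2 = 0}

/-- `V₀ = {(I,(t,0)) : t ∈ ℝ}`. -/
def V0 : Set GG := {x | ∃ t : ℝ, x.1 = 1 ∧ x.2 = ![t, 0]}

def upperUnipotent (s : ℝ) : SL2 :=
  ⟨!![1, s; 0, 1], by simp [Matrix.det_fin_two_of]⟩

def Cset (v : Fin 2 → ℝ) : Set GG := {p | p.2 = v - ((p.1 : SL2) : Matrix (Fin 2) (Fin 2) ℝ).mulVec v}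

lemma coe_inv_mul (a : SL2) : ((a⁻¹ : SL2) : Matrix (Fin 2) (Fin 2) ℝ) * (a : Matrix (Fin 2) (Fin 2) ℝ) = 1 := by
  rw [← Matrix.SpecialLinearGroup.coe_mul, inv_mul_cancel]
  simp

lemma conj_L (x : GG) : conjSet x Lset = Cset x.2 := by
  ext p
  constructor
  · rintro ⟨h, hh, rfl⟩
    have h2 : h.2 = 0 := hh
    simp only [Cset, gmul, ginv, Set.mem_setOf_eq, h2]
    simp [Matrix.mulVec_neg, Matrix.mulVec_mulVec, h2, sub_eq_add_neg,
      Matrix.SpecialLinearGroup.coe_mul, Matrix.mul_assoc, -Matrix.mulVec_fin_two]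
  · intro hp
    refine ⟨(x.1⁻¹ * p.1 * x.1, 0), rfl, ?_⟩
    simp only [gmul, ginv]
    have h1' : x.1 * (x.1⁻¹ * p.1 * x.1) = p.1 * x.1 := by group
    rw [h1']
    have h1 : p.1 * x.1 * x.1⁻¹ = p.1 := by group
    rw [h1]
    refine Prod.ext rfl ?_
    have hp' : p.2 = x.2 - ((p.1 : SL2) : Matrix (Fin 2) (Fin 2) ℝ).mulVec x.2 := hp
    simp [hp', Matrix.mulVec_neg, Matrix.mulVec_mulVec, sub_eq_add_neg,
      Matrix.SpecialLinearGroup.coe_mul, Matrix.mul_assoc, Matrix.mul_adjugate, -Matrix.mulVec_fin_two]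

lemma unip_iff (g : SL2) :
    (∃ s : ℝ, (g : Matrix (Fin 2) (Fin 2) ℝ) = !![1, s; 0, 1]) ↔
      (g : Matrix (Fin 2) (Fin 2) ℝ).mulVec ![1, 0] = ![1, 0] := by
  constructor
  · rintro ⟨s, hs⟩
    rw [hs]
    funext i
    fin_cases i <;> simp [Matrix.mulVec, dotProduct, Fin.sum_univ_two]
  · intro h
    refine ⟨(g : Matrix (Fin 2) (Fin 2) ℝ) 0 1, ?_⟩
    have h0 : (g : Matrix (Fin 2) (Fin 2) ℝ) 0 0 = 1 := by
      have := congrFun h 0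
      simpa [Matrix.mulVec, dotProduct, Fin.sum_univ_two] using this
    have h1 : (g : Matrix (Fin 2) (Fin 2) ℝ) 1 0 = 0 := by
      have := congrFun h 1
      simpa [Matrix.mulVec, dotProduct, Fin.sum_univ_two] using this
    have hdet : (g : Matrix (Fin 2) (Fin 2) ℝ).det = 1 := g.2
    rw [Matrix.det_fin_two, h0, h1] at hdet
    have h2 : (g : Matrix (Fin 2) (Fin 2) ℝ) 1 1 = 1 := by linarith
    ext i j
    fin_cases i <;> fin_cases j <;> simp [h0, h1, h2]

lemma conjN (k : SL2) : conjSet (k, 0) NplusR2 =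
    {p : GG | ((p.1 : SL2) : Matrix (Fin 2) (Fin 2) ℝ).mulVec
        ((k : Matrix (Fin 2) (Fin 2) ℝ).mulVec ![1, 0]) =
      (k : Matrix (Fin 2) (Fin 2) ℝ).mulVec ![1, 0]} := by
  ext p
  constructor
  · rintro ⟨h, ⟨s, hs⟩, rfl⟩
    simp only [gmul, ginv, Set.mem_setOf_eq, Matrix.SpecialLinearGroup.coe_mul,
      Matrix.mulVec_mulVec]
    have hk : ((k⁻¹ : SL2) : Matrix (Fin 2) (Fin 2) ℝ) * (k : Matrix (Fin 2) (Fin 2) ℝ) = 1 :=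
      coe_inv_mul k
    rw [Matrix.mul_assoc _ _ ((k : Matrix (Fin 2) (Fin 2) ℝ)), hk, Matrix.mul_one, hs]
    rw [← Matrix.mulVec_mulVec]
    funext i
    fin_cases i <;> simp [Matrix.mulVec, dotProduct, Fin.sum_univ_two]
  · intro hp
    refine ⟨(k⁻¹ * p.1 * k, (k⁻¹ : SL2).1.mulVec p.2), ?_, ?_⟩
    · rw [NplusR2, Set.mem_setOf_eq, unip_iff]
      simp only [Matrix.SpecialLinearGroup.coe_mul, Matrix.mulVec_mulVec]
      rw [Matrix.mul_assoc, ← Matrix.mulVec_mulVec, ← Matrix.mulVec_mulVec, hp,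
        Matrix.mulVec_mulVec, coe_inv_mul, Matrix.one_mulVec]
    · simp only [gmul, ginv]
      have h1' : k * (k⁻¹ * p.1 * k) = p.1 * k := by group
      rw [h1']
      have h1 : p.1 * k * k⁻¹ = p.1 := by group
      rw [h1]
      refine Prod.ext rfl ?_
      simp [Matrix.mulVec_mulVec, Matrix.SpecialLinearGroup.coe_mul,
        Matrix.mul_adjugate, Matrix.mul_assoc, -Matrix.mulVec_fin_two]

def det2 (a b : Fin 2 → ℝ) : ℝ := a 0 * b 1 - a 1 * b 0

def solveMat (a b c d : Fin 2 → ℝ) : Matrix (Fin 2) (Fin 2) ℝ :=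
  (det2 a b)⁻¹ • !![c 0 * b 1 - d 0 * a 1, d 0 * a 0 - c 0 * b 0;
                    c 1 * b 1 - d 1 * a 1, d 1 * a 0 - c 1 * b 0]

lemma det2_mulVec (M : Matrix (Fin 2) (Fin 2) ℝ) (x y : Fin 2 → ℝ) :
    det2 (M.mulVec x) (M.mulVec y) = M.det * det2 x y := by
  simp [det2, Matrix.mulVec, dotProduct, Fin.sum_univ_two, Matrix.det_fin_two]
  ring

lemma det2_smul_right (a y : Fin 2 → ℝ) (s : ℝ) : det2 a (s • y) = s * det2 a y := by
  simp [det2]; ring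

lemma solveMat_det (a b c d : Fin 2 → ℝ) (hD : det2 a b ≠ 0) :
    (solveMat a b c d).det = det2 c d / det2 a b := by
  rw [solveMat, Matrix.det_smul]
  simp only [Matrix.det_fin_two_of, Fintype.card_fin, det2] at *
  field_simp
  ring

lemma solveMat_mulVec_left (a b c d : Fin 2 → ℝ) (hD : det2 a b ≠ 0) :
    (solveMat a b c d).mulVec a = c := by
  funext i
  fin_cases i <;>
  · simp only [solveMat, Matrix.smul_mulVec, Matrix.mulVec, dotProduct,
      Fin.sum_univ_two, Pi.smul_apply, smul_eq_mul, det2] at *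
    simp [Matrix.cons_val_zero, Matrix.cons_val_one]
    field_simp
    ring

lemma solveMat_mulVec_right (a b c d : Fin 2 → ℝ) (hD : det2 a b ≠ 0) :
    (solveMat a b c d).mulVec b = d := by
  funext i
  fin_cases i <;>
  · simp only [solveMat, Matrix.smul_mulVec, Matrix.mulVec, dotProduct,
      Fin.sum_univ_two, Pi.smul_apply, smul_eq_mul, det2] at *
    simp [Matrix.cons_val_zero, Matrix.cons_val_one]
    field_simp
    ring

lemma solveMat_unique (M : Matrix (Fin 2) (Fin 2) ℝ) (a b : Fin 2 → ℝ)
    (hD : det2 a b ≠ 0) : M = solveMat a b (M.mulVec a) (M.mulVec b) := by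
  ext i j
  fin_cases i <;> fin_cases j <;>
  · simp only [solveMat, Matrix.smul_apply, Matrix.mulVec, dotProduct,
      Fin.sum_univ_two, smul_eq_mul, det2] at *
    simp [Matrix.cons_val_zero, Matrix.cons_val_one]
    field_simp
    ring

lemma tendsto_SL2_iff {f : ℕ → SL2} {g : SL2} :
    Tendsto f atTop (𝓝 g) ↔
      Tendsto (fun n => ((f n : SL2) : Matrix (Fin 2) (Fin 2) ℝ)) atTop
        (𝓝 ((g : SL2) : Matrix (Fin 2) (Fin 2) ℝ)) := by
  exact Topology.IsInducing.tendsto_nhds_iff ⟨rfl⟩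

lemma entry_tendsto {M : ℕ → Matrix (Fin 2) (Fin 2) ℝ} {A : Matrix (Fin 2) (Fin 2) ℝ}
    (hM : Tendsto M atTop (𝓝 A)) (i j : Fin 2) :
    Tendsto (fun n => M n i j) atTop (𝓝 (A i j)) :=
  tendsto_pi_nhds.mp (tendsto_pi_nhds.mp hM i) j

lemma matrix_tendsto_of_entries {M : ℕ → Matrix (Fin 2) (Fin 2) ℝ}
    {A : Matrix (Fin 2) (Fin 2) ℝ}
    (h : ∀ i j, Tendsto (fun n => M n i j) atTop (𝓝 (A i j))) :
    Tendsto M atTop (𝓝 A) :=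
  tendsto_pi_nhds.mpr fun i => tendsto_pi_nhds.mpr fun j => h i j

lemma tendsto_mulVec {M : ℕ → Matrix (Fin 2) (Fin 2) ℝ} {w : ℕ → Fin 2 → ℝ}
    {A : Matrix (Fin 2) (Fin 2) ℝ} {w₀ : Fin 2 → ℝ}
    (hM : Tendsto M atTop (𝓝 A)) (hw : Tendsto w atTop (𝓝 w₀)) :
    Tendsto (fun n => (M n).mulVec (w n)) atTop (𝓝 (A.mulVec w₀)) := by
  apply tendsto_pi_nhds.mpr
  intro i
  simp only [Matrix.mulVec, dotProduct, Fin.sum_univ_two]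
  exact ((entry_tendsto hM i 0).mul (tendsto_pi_nhds.mp hw 0)).add
    ((entry_tendsto hM i 1).mul (tendsto_pi_nhds.mp hw 1))

lemma tendsto_det2 {a b : ℕ → Fin 2 → ℝ} {a₀ b₀ : Fin 2 → ℝ}
    (ha : Tendsto a atTop (𝓝 a₀)) (hb : Tendsto b atTop (𝓝 b₀)) :
    Tendsto (fun n => det2 (a n) (b n)) atTop (𝓝 (det2 a₀ b₀)) := by
  simp only [det2]
  exact ((tendsto_pi_nhds.mp ha 0).mul (tendsto_pi_nhds.mp hb 1)).sub
    ((tendsto_pi_nhds.mp ha 1).mul (tendsto_pi_nhds.mp hb 0))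

lemma tendsto_solveMat {a b c d : ℕ → Fin 2 → ℝ} {a₀ b₀ c₀ d₀ : Fin 2 → ℝ}
    (ha : Tendsto a atTop (𝓝 a₀)) (hb : Tendsto b atTop (𝓝 b₀))
    (hc : Tendsto c atTop (𝓝 c₀)) (hd : Tendsto d atTop (𝓝 d₀))
    (hD : det2 a₀ b₀ ≠ 0) :
    Tendsto (fun n => solveMat (a n) (b n) (c n) (d n)) atTop
      (𝓝 (solveMat a₀ b₀ c₀ d₀)) := by
  apply matrix_tendsto_of_entries
  intro i j
  have hDinv : Tendsto (fun n => (det2 (a n) (b n))⁻¹) atTop (𝓝 (det2 a₀ b₀)⁻¹) :=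
    (tendsto_det2 ha hb).inv₀ hD
  have h0 : ∀ (x : ℕ → Fin 2 → ℝ) (x₀ : Fin 2 → ℝ) (hx : Tendsto x atTop (𝓝 x₀)) (i : Fin 2),
      Tendsto (fun n => x n i) atTop (𝓝 (x₀ i)) := fun x x₀ hx i => tendsto_pi_nhds.mp hx i
  fin_cases i <;> fin_cases j <;>
  · simp only [solveMat, Matrix.smul_apply, smul_eq_mul, Fin.mk_zero, Fin.mk_one,
      Matrix.cons_val', Matrix.cons_val_zero, Matrix.cons_val_one, Matrix.head_cons,
      Matrix.empty_val', Matrix.cons_val_fin_one, Matrix.head_fin_const,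
      Matrix.of_apply, Fin.isValue]
    refine hDinv.mul (Tendsto.sub (Tendsto.mul ?_ ?_) (Tendsto.mul ?_ ?_)) <;>
      first
        | exact h0 _ _ ha _
        | exact h0 _ _ hb _
        | exact h0 _ _ hc _
        | exact h0 _ _ hd _

lemma mulVec_smul' (M : Matrix (Fin 2) (Fin 2) ℝ) (s : ℝ) (w : Fin 2 → ℝ) :
    M.mulVec (s • w) = s • M.mulVec w := by
  funext i
  simp [Matrix.mulVec, dotProduct, Fin.sum_univ_two, smul_eq_mul, -Matrix.mulVec_fin_two]
  ring

lemma gg_tendsto {U : ℕ → GG} {a : SL2} {b : Fin 2 → ℝ}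
    (h1 : Tendsto (fun n => (U n).1) atTop (𝓝 a))
    (h2 : Tendsto (fun n => (U n).2) atTop (𝓝 b)) :
    Tendsto U atTop (𝓝 ((a, b) : GG)) := by
  have := h1.prodMk_nhds h2
  simpa using this

/-- Any Chabauty limit of conjugates of the Levi subgroup `L = SL(2,ℝ) × {0}` is either a
conjugate of `L` or a conjugate of `N⁺ ⋉ ℝ²`. -/
theorem stmt_5 (x : ℕ → GG) (H : Set GG) (hH : IsClosedSubgroup H)
    (hconv : ChabautyTendsto (fun n => conjSet (x n) Lset) H) :
    ∃ y : GG, H = conjSet y Lset ∨ H = conjSet y NplusR2 := by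

  classical
  set v : ℕ → Fin 2 → ℝ := fun n => (x n).2 with hv
  have hS : ∀ n, conjSet (x n) Lset = Cset (v n) := fun n => conj_L (x n)
  by_cases hbdd : ∃ M : ℝ, ∀ n, ‖v n‖ ≤ M
  · obtain ⟨M, hM⟩ := hbdd
    have hmem : ∀ n, v n ∈ Metric.closedBall (0 : Fin 2 → ℝ) M := fun n => by
      simpa [Metric.mem_closedBall, dist_zero_right] using hM n
    obtain ⟨v₀, _, k, hk, hvk⟩ :=
      tendsto_subseq_of_bounded (Metric.isBounded_closedBall (x := (0 : Fin 2 → ℝ))) hmem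
    refine ⟨((1 : SL2), v₀), Or.inl ?_⟩
    rw [conj_L]
    apply Set.Subset.antisymm
    · intro h hh
      obtain ⟨u, hu, hulim⟩ := hconv.1 h hh
      have h1 : Tendsto (fun n => u (k n)) atTop (𝓝 h) := hulim.comp hk.tendsto_atTop
      have hfst : Tendsto (fun n => ((u (k n)).1 : Matrix (Fin 2) (Fin 2) ℝ)) atTop
          (𝓝 ((h.1 : SL2) : Matrix (Fin 2) (Fin 2) ℝ)) :=
        tendsto_SL2_iff.mp ((continuous_fst.tendsto h).comp h1)
      have hsnd : Tendsto (fun n => (u (k n)).2) atTop (𝓝 h.2) :=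
        (continuous_snd.tendsto h).comp h1
      have hmemu : ∀ n, (u (k n)).2
          = v (k n) - (((u (k n)).1 : SL2) : Matrix (Fin 2) (Fin 2) ℝ).mulVec (v (k n)) :=
        fun n => by have h2 := hu (k n); simp only [hS] at h2; exact h2
      have hlim2 : Tendsto (fun n => (u (k n)).2) atTop
          (𝓝 (v₀ - ((h.1 : SL2) : Matrix (Fin 2) (Fin 2) ℝ).mulVec v₀)) := by
        refine Tendsto.congr (fun n => (hmemu n).symm) (hvk.sub (tendsto_mulVec hfst hvk))
      exact tendsto_nhds_unique hsnd hlim2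
    · intro p hp
      have hp' : p.2 = v₀ - ((p.1 : SL2) : Matrix (Fin 2) (Fin 2) ℝ).mulVec v₀ := hp
      set useq : ℕ → GG := fun n =>
        (p.1, v (k n) - ((p.1 : SL2) : Matrix (Fin 2) (Fin 2) ℝ).mulVec (v (k n))) with huseq
      have hmemu : ∀ n, useq n ∈ conjSet (x (k n)) Lset := fun n => by
        rw [hS]; exact rfl
      have hlim : Tendsto useq atTop (𝓝 p) := by
        rw [← Prod.mk.eta (p := p), hp']
        exact gg_tendsto tendsto_const_nhds (hvk.sub (tendsto_mulVec tendsto_const_nhds hvk))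
      exact hconv.2 k hk useq hmemu p hlim
  · push_neg at hbdd
    have hfreq : ∀ m : ℕ, ∃ᶠ l in atTop, (m : ℝ) < ‖v l‖ := by
      intro m
      rw [Filter.frequently_atTop]
      intro N
      by_contra hcon
      push_neg at hcon
      obtain ⟨C, hC⟩ := ((Finset.range N).image fun l => ‖v l‖).exists_le
      obtain ⟨n, hn⟩ := hbdd (max C (m : ℝ))
      rcases lt_or_ge n N with h | h
      · have h1 : ‖v n‖ ≤ C := hC _ (Finset.mem_image_of_mem _ (Finset.mem_range.2 h))
        have h2 := le_max_left C (m : ℝ)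
        linarith [hn]
      · have h1 := hcon n h
        have h2 := le_max_right C (m : ℝ)
        linarith [hn]
    obtain ⟨φ, hφ, hφP⟩ := Filter.extraction_forall_of_frequently hfreq
    set k1 : ℕ → ℕ := fun n => φ (n + 1) with hk1def
    have hk1 : StrictMono k1 := fun a b h => hφ (by omega)
    have hr : ∀ n : ℕ, (n : ℝ) + 1 ≤ ‖v (k1 n)‖ := fun n => by
      have := hφP (n + 1)
      push_cast at this
      linarith
    have hrpos : ∀ n, 0 < ‖v (k1 n)‖ := fun n =>
      lt_of_lt_of_le (by positivity) (hr n)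
    set un : ℕ → Fin 2 → ℝ := fun n => (‖v (k1 n)‖)⁻¹ • v (k1 n) with hundef
    have hun : ∀ n, un n ∈ Metric.sphere (0 : Fin 2 → ℝ) 1 := fun n => by
      rw [mem_sphere_zero_iff_norm]
      rw [hundef]
      simp only [norm_smul, norm_inv, norm_norm]
      exact inv_mul_cancel₀ (hrpos n).ne'
    obtain ⟨u₀, hu₀cl, k2, hk2, huk⟩ :=
      tendsto_subseq_of_bounded (Metric.isBounded_sphere (x := (0 : Fin 2 → ℝ)) (r := 1)) hun
    rw [Metric.isClosed_sphere.closure_eq] at hu₀cl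
    have hu₀ : ‖u₀‖ = 1 := mem_sphere_zero_iff_norm.mp hu₀cl
    have hu₀ne : u₀ ≠ 0 := by
      intro h0
      rw [h0] at hu₀
      simp at hu₀
    set q : ℝ := u₀ 0 ^ 2 + u₀ 1 ^ 2 with hqdef
    have hq : q ≠ 0 := by
      intro h0
      apply hu₀ne
      have h1 : u₀ 0 = 0 := by nlinarith [sq_nonneg (u₀ 0), sq_nonneg (u₀ 1)]
      have h2 : u₀ 1 = 0 := by nlinarith [sq_nonneg (u₀ 0), sq_nonneg (u₀ 1)]
      funext i
      fin_cases i <;> simpa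
    set Ju : Fin 2 → ℝ := ![-(u₀ 1), u₀ 0] with hJudef
    have hdet2u : det2 u₀ Ju = q := by
      simp [det2, hJudef, hqdef]
      ring
    set k₀ : SL2 := ⟨!![u₀ 0, -(u₀ 1) / q; u₀ 1, u₀ 0 / q], by
      rw [Matrix.det_fin_two_of]
      field_simp
      ring⟩ with hk₀def
    have hk₀e1 : ((k₀ : SL2) : Matrix (Fin 2) (Fin 2) ℝ).mulVec ![1, 0] = u₀ := by
      funext i
      fin_cases i <;> simp [hk₀def, Matrix.mulVec, dotProduct, Fin.sum_univ_two]
    refine ⟨(k₀, (0 : Fin 2 → ℝ)), Or.inr ?_⟩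
    rw [conjN, hk₀e1]
    set K : ℕ → ℕ := fun n => k1 (k2 n) with hKdef
    have hK : StrictMono K := hk1.comp hk2
    set R : ℕ → ℝ := fun n => ‖v (K n)‖ with hRdef
    have hRne : ∀ n, R n ≠ 0 := fun n => (hrpos (k2 n)).ne'
    have hU : Tendsto (fun n => un (k2 n)) atTop (𝓝 u₀) := huk
    have hUeq : ∀ n, un (k2 n) = (R n)⁻¹ • v (K n) := fun n => rfl
    have hRtop : Tendsto R atTop atTop := by
      apply tendsto_atTop_mono _ tendsto_natCast_atTop_atTop
      intro n
      have h1 : (n : ℝ) ≤ (k2 n : ℝ) := Nat.cast_le.mpr hk2.le_apply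
      have h2 := hr (k2 n)
      show (n : ℝ) ≤ ‖v (k1 (k2 n))‖
      linarith
    have hRinv : Tendsto (fun n => (R n)⁻¹) atTop (𝓝 0) :=
      tendsto_inv_atTop_zero.comp hRtop
    apply Set.Subset.antisymm
    · intro h hh
      obtain ⟨u, hu, hulim⟩ := hconv.1 h hh
      have h1 : Tendsto (fun n => u (K n)) atTop (𝓝 h) := hulim.comp hK.tendsto_atTop
      have hfst : Tendsto (fun n => ((u (K n)).1 : Matrix (Fin 2) (Fin 2) ℝ)) atTop
          (𝓝 ((h.1 : SL2) : Matrix (Fin 2) (Fin 2) ℝ)) :=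
        tendsto_SL2_iff.mp ((continuous_fst.tendsto h).comp h1)
      have hsnd : Tendsto (fun n => (u (K n)).2) atTop (𝓝 h.2) :=
        (continuous_snd.tendsto h).comp h1
      have hmemu : ∀ n, (u (K n)).2
          = v (K n) - (((u (K n)).1 : SL2) : Matrix (Fin 2) (Fin 2) ℝ).mulVec (v (K n)) :=
        fun n => by have h2 := hu (K n); simp only [hS] at h2; exact h2
      have e1 : Tendsto (fun n => (R n)⁻¹ • (u (K n)).2) atTop (𝓝 ((0 : ℝ) • h.2)) :=
        hRinv.smul hsnd
      have e2 : ∀ n, (R n)⁻¹ • (u (K n)).2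
          = un (k2 n) - (((u (K n)).1 : SL2) : Matrix (Fin 2) (Fin 2) ℝ).mulVec (un (k2 n)) := by
        intro n
        rw [hmemu n, smul_sub, hUeq n, mulVec_smul']
      have e3 : Tendsto (fun n => (R n)⁻¹ • (u (K n)).2) atTop
          (𝓝 (u₀ - ((h.1 : SL2) : Matrix (Fin 2) (Fin 2) ℝ).mulVec u₀)) := by
        refine Tendsto.congr (fun n => (e2 n).symm) (hU.sub (tendsto_mulVec hfst hU))
      have e4 : u₀ - ((h.1 : SL2) : Matrix (Fin 2) (Fin 2) ℝ).mulVec u₀ = (0 : ℝ) • h.2 :=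
        tendsto_nhds_unique e3 e1
      rw [zero_smul] at e4
      exact (sub_eq_zero.mp e4).symm
    · intro p hp
      have hp' : ((p.1 : SL2) : Matrix (Fin 2) (Fin 2) ℝ).mulVec u₀ = u₀ := hp
      set g : Matrix (Fin 2) (Fin 2) ℝ := ((p.1 : SL2) : Matrix (Fin 2) (Fin 2) ℝ) with hgdef
      set gJu : Fin 2 → ℝ := g.mulVec Ju with hgJudef
      have hdet2gJu : det2 u₀ gJu = q := by
        rw [hgJudef, ← hp', det2_mulVec, p.1.2, one_mul, hdet2u]
      set cc : ℕ → Fin 2 → ℝ := fun n => un (k2 n) - (R n)⁻¹ • p.2 with hccdef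
      have hcc : Tendsto cc atTop (𝓝 u₀) := by
        have := hU.sub (hRinv.smul (tendsto_const_nhds (x := p.2)))
        simpa using this
      set ss : ℕ → ℝ := fun n => det2 (un (k2 n)) Ju / det2 (cc n) gJu with hssdef
      have hss : Tendsto ss atTop (𝓝 1) := by
        have h1 : Tendsto (fun n => det2 (un (k2 n)) Ju) atTop (𝓝 q) := by
          have := tendsto_det2 hU (tendsto_const_nhds (x := Ju))
          rwa [hdet2u] at this
        have h2 : Tendsto (fun n => det2 (cc n) gJu) atTop (𝓝 q) := by
          have := tendsto_det2 hcc (tendsto_const_nhds (x := gJu))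
          rwa [hdet2gJu] at this
        have := h1.div h2 hq
        rwa [div_self hq] at this
      set dd : ℕ → Fin 2 → ℝ := fun n => ss n • gJu with hdddef
      have hdd : Tendsto dd atTop (𝓝 gJu) := by
        have := hss.smul (tendsto_const_nhds (x := gJu))
        simpa using this
      set Mseq : ℕ → Matrix (Fin 2) (Fin 2) ℝ :=
        fun n => solveMat (un (k2 n)) Ju (cc n) (dd n) with hMseqdef
      have hgsolve : g = solveMat u₀ Ju u₀ gJu := by
        have := solveMat_unique g u₀ Ju (by rw [hdet2u]; exact hq)
        rwa [hp', ← hgJudef] at this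
      have hMlim : Tendsto Mseq atTop (𝓝 g) := by
        rw [hgsolve]
        exact tendsto_solveMat hU (tendsto_const_nhds (x := Ju)) hcc hdd
          (by rw [hdet2u]; exact hq)
      set P : ℕ → Prop := fun n => det2 (un (k2 n)) Ju ≠ 0 ∧ det2 (cc n) gJu ≠ 0 with hPdef
      have hPev : ∀ᶠ n in atTop, P n := by
        have h1 : Tendsto (fun n => det2 (un (k2 n)) Ju) atTop (𝓝 q) := by
          have := tendsto_det2 hU (tendsto_const_nhds (x := Ju))
          rwa [hdet2u] at this
        have h2 : Tendsto (fun n => det2 (cc n) gJu) atTop (𝓝 q) := by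
          have := tendsto_det2 hcc (tendsto_const_nhds (x := gJu))
          rwa [hdet2gJu] at this
        exact (h1.eventually_ne hq).and (h2.eventually_ne hq)
      have hMdet : ∀ n, P n → (Mseq n).det = 1 := by
        intro n hPn
        rw [hMseqdef]
        rw [solveMat_det _ _ _ _ hPn.1, hdddef, det2_smul_right, hssdef]
        dsimp only
        rw [div_mul_cancel₀ _ hPn.2]
        exact div_self hPn.1
      set useq : ℕ → GG := fun n =>
        if hPn : P n then ((⟨Mseq n, hMdet n hPn⟩ : SL2), p.2) else gone with huseqdef
      have hmemu : ∀ n, useq n ∈ conjSet (x (K n)) Lset := by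
        intro n
        rw [hS]
        by_cases hPn : P n
        · have huseqn : useq n = ((⟨Mseq n, hMdet n hPn⟩ : SL2), p.2) := by
            rw [huseqdef]; exact dif_pos hPn
          rw [huseqn]
          show p.2 = v (K n) - (Mseq n).mulVec (v (K n))
          have hVn : v (K n) = R n • un (k2 n) := by
            rw [hUeq n, smul_smul, mul_inv_cancel₀ (hRne n), one_smul]
          rw [hVn, mulVec_smul', hMseqdef, solveMat_mulVec_left _ _ _ _ hPn.1, hccdef]
          rw [smul_sub, smul_smul, mul_inv_cancel₀ (hRne n), one_smul]
          simp [smul_smul, mul_inv_cancel₀ (hRne n)]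
        · have huseqn : useq n = gone := by rw [huseqdef]; exact dif_neg hPn
          rw [huseqn]
          show (0 : Fin 2 → ℝ) = v (K n) - ((1 : SL2) : Matrix (Fin 2) (Fin 2) ℝ).mulVec (v (K n))
          simp
      have hlim : Tendsto useq atTop (𝓝 p) := by
        have hfst : Tendsto (fun n => ((useq n).1 : Matrix (Fin 2) (Fin 2) ℝ)) atTop (𝓝 g) := by
          apply hMlim.congr'
          filter_upwards [hPev] with n hPn
          simp only [huseqdef]; rw [dif_pos hPn]
        have hsnd : Tendsto (fun n => (useq n).2) atTop (𝓝 p.2) := by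
          apply (tendsto_const_nhds (x := p.2)).congr'
          filter_upwards [hPev] with n hPn
          simp only [huseqdef]; rw [dif_pos hPn]
        have := gg_tendsto (tendsto_SL2_iff.mpr hfst) hsnd
        rwa [Prod.mk.eta] at this
      exact hconv.2 K hK useq hmemu p hlim


end
end

section
/- Let P = {((a, s; 0, 1/a), v) : a ∈ ℝ, a ≠ 0, s ∈ ℝ, v ∈ ℝ²} ⊆ G be the Borel subgroup B ⋉ ℝ², where B is the group of upper triangular matrices in SL(2,ℝ). If (x_n) is a sequence in G such that x_n P x_n⁻¹ converges in the Chabauty sense to a closed subgroup H of G, then there exists x ∈ G with H = x P x⁻¹. In particular, the set of conjugates of P is closed under Chabauty limits. -/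
open Filter Topology

noncomputable section

section Stmt10Aux

/-- The first standard basis vector. -/
def e0 : Fin 2 → ℝ := ![1, 0]

/-- The stabilizer (up to scale) of a vector `w`, together with arbitrary translation part. -/
def Stab (w : Fin 2 → ℝ) : Set GG :=
  {z | ∃ c : ℝ, c ≠ 0 ∧ (z.1 : Matrix (Fin 2) (Fin 2) ℝ).mulVec w = c • w}

lemma mulVec_e0 (M : Matrix (Fin 2) (Fin 2) ℝ) : M.mulVec e0 = fun i => M i 0 := by
  funext i
  simp [e0, Matrix.mulVec, dotProduct, Fin.sum_univ_two]

lemma coe_mul_inv_cancel (g : SL2) :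
    ((g : Matrix (Fin 2) (Fin 2) ℝ)) * ((g⁻¹ : SL2) : Matrix (Fin 2) (Fin 2) ℝ) = 1 := by
  rw [← Matrix.SpecialLinearGroup.coe_mul, mul_inv_cancel]
  rfl

lemma coe_inv_mul_cancel (g : SL2) :
    (((g⁻¹ : SL2) : Matrix (Fin 2) (Fin 2) ℝ)) * ((g : Matrix (Fin 2) (Fin 2) ℝ)) = 1 := by
  rw [← Matrix.SpecialLinearGroup.coe_mul, inv_mul_cancel]
  rfl

lemma gconj_cancel (x z : GG) :
    gmul (gmul x (gmul (gmul (ginv x) z) x)) (ginv x) = z := by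
  obtain ⟨g, v⟩ := x
  obtain ⟨m, w⟩ := z
  have h1 : ∀ A : Matrix (Fin 2) (Fin 2) ℝ,
      ((g : Matrix (Fin 2) (Fin 2) ℝ)) * (((g⁻¹ : SL2) : Matrix (Fin 2) (Fin 2) ℝ) * A) = A := by
    intro A; rw [← mul_assoc, coe_mul_inv_cancel, one_mul]
  have h2 : ∀ A : Matrix (Fin 2) (Fin 2) ℝ,
      (((g⁻¹ : SL2) : Matrix (Fin 2) (Fin 2) ℝ)) * (((g : SL2) : Matrix (Fin 2) (Fin 2) ℝ) * A) = A := by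
    intro A; rw [← mul_assoc, coe_inv_mul_cancel, one_mul]
  simp only [gmul, ginv, Prod.mk.injEq]
  constructor
  · group
  · simp only [Matrix.SpecialLinearGroup.coe_mul, Matrix.mulVec_add, Matrix.mulVec_neg,
      Matrix.mulVec_mulVec, mul_assoc, h1, h2, coe_mul_inv_cancel, coe_inv_mul_cancel,
      Matrix.one_mulVec, mul_one, one_mul]
    abel

lemma gmul_ginv (x : GG) : gmul x (ginv x) = gone := by
  refine Prod.ext (mul_inv_cancel x.1) ?_
  show x.2 + (x.1 : Matrix (Fin 2) (Fin 2) ℝ).mulVec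
      (-((x.1⁻¹ : SL2) : Matrix (Fin 2) (Fin 2) ℝ).mulVec x.2) = 0
  rw [Matrix.mulVec_neg, Matrix.mulVec_mulVec, coe_mul_inv_cancel, Matrix.one_mulVec,
    add_neg_cancel]

lemma gmul_gone (x : GG) : gmul x gone = x := by
  refine Prod.ext (mul_one x.1) ?_
  show x.2 + (x.1 : Matrix (Fin 2) (Fin 2) ℝ).mulVec 0 = x.2
  rw [Matrix.mulVec_zero, add_zero]

lemma gone_mem_Pset : gone ∈ Pset := by
  refine ⟨1, 0, one_ne_zero, ?_⟩
  show ((1 : SL2) : Matrix (Fin 2) (Fin 2) ℝ) = _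
  rw [Matrix.SpecialLinearGroup.coe_one, Matrix.one_fin_two]
  norm_num

lemma gone_mem_conjSet_Pset (x : GG) : gone ∈ conjSet x Pset :=
  ⟨gone, gone_mem_Pset, by show gmul (gmul x gone) (ginv x) = gone; rw [gmul_gone, gmul_ginv]⟩

lemma conjSet_Pset_eq_stab (x : GG) :
    conjSet x Pset = Stab ((x.1 : Matrix (Fin 2) (Fin 2) ℝ).mulVec e0) := by
  ext z
  constructor
  · rintro ⟨p, ⟨a, s, ha, hmat⟩, rfl⟩
    refine ⟨a, ha, ?_⟩
    have hz1 : ((gmul (gmul x p) (ginv x)).1 : Matrix (Fin 2) (Fin 2) ℝ)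
        = (x.1 : Matrix (Fin 2) (Fin 2) ℝ) * p.1 * ((x.1⁻¹ : SL2) : Matrix (Fin 2) (Fin 2) ℝ) := by
      simp [gmul, ginv, Matrix.SpecialLinearGroup.coe_mul]
    rw [hz1]
    have hpe0 : (p.1 : Matrix (Fin 2) (Fin 2) ℝ).mulVec e0 = a • e0 := by
      rw [mulVec_e0, hmat]
      funext i
      fin_cases i <;> simp [e0]
    rw [Matrix.mulVec_mulVec, mul_assoc, coe_inv_mul_cancel, mul_one,
      ← Matrix.mulVec_mulVec, hpe0, Matrix.mulVec_smul]
  · rintro ⟨c, hc, hzw⟩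
    refine ⟨gmul (gmul (ginv x) z) x, ?_, gconj_cancel x z⟩
    set p := gmul (gmul (ginv x) z) x with hp
    have hp1 : (p.1 : Matrix (Fin 2) (Fin 2) ℝ)
        = ((x.1⁻¹ : SL2) : Matrix (Fin 2) (Fin 2) ℝ) * (z.1 : Matrix (Fin 2) (Fin 2) ℝ)
          * (x.1 : Matrix (Fin 2) (Fin 2) ℝ) := by
      simp [hp, gmul, ginv, Matrix.SpecialLinearGroup.coe_mul]
    have hcol : (p.1 : Matrix (Fin 2) (Fin 2) ℝ).mulVec e0 = c • e0 := by
      have he0 : e0 = ((x.1⁻¹ : SL2) : Matrix (Fin 2) (Fin 2) ℝ).mulVec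
          ((x.1 : Matrix (Fin 2) (Fin 2) ℝ).mulVec e0) := by
        rw [Matrix.mulVec_mulVec, coe_inv_mul_cancel, Matrix.one_mulVec]
      rw [hp1, ← Matrix.mulVec_mulVec, ← Matrix.mulVec_mulVec, hzw, Matrix.mulVec_smul,
        Matrix.mulVec_mulVec, coe_inv_mul_cancel, Matrix.one_mulVec]
    have h00 : (p.1 : Matrix (Fin 2) (Fin 2) ℝ) 0 0 = c := by
      have := congrFun hcol 0
      rw [mulVec_e0] at hcol
      have := congrFun hcol 0
      simpa [e0] using this
    have h10 : (p.1 : Matrix (Fin 2) (Fin 2) ℝ) 1 0 = 0 := by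
      rw [mulVec_e0] at hcol
      have := congrFun hcol 1
      simpa [e0] using this
    have hdet : ((p.1 : Matrix (Fin 2) (Fin 2) ℝ)).det = 1 := p.1.2
    rw [Matrix.det_fin_two, h00, h10] at hdet
    refine ⟨c, (p.1 : Matrix (Fin 2) (Fin 2) ℝ) 0 1, hc, ?_⟩
    have h11 : (p.1 : Matrix (Fin 2) (Fin 2) ℝ) 1 1 = c⁻¹ := by
      field_simp
      linarith [hdet]
    ext i j
    fin_cases i <;> fin_cases j <;> simp [h00, h10, h11]

lemma stab_smul (r : ℝ) (hr : r ≠ 0) (w : Fin 2 → ℝ) : Stab (r • w) = Stab w := by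
  ext z
  constructor
  · rintro ⟨c, hc, h⟩
    refine ⟨c, hc, ?_⟩
    rw [Matrix.mulVec_smul] at h
    have h' : r • ((z.1 : Matrix (Fin 2) (Fin 2) ℝ).mulVec w) = r • (c • w) := by
      rw [h, smul_comm]
    exact smul_right_injective (Fin 2 → ℝ) hr h'
  · rintro ⟨c, hc, h⟩
    exact ⟨c, hc, by rw [Matrix.mulVec_smul, h, smul_comm]⟩

lemma gone_mem_stab (w : Fin 2 → ℝ) : gone ∈ Stab w :=
  ⟨1, one_ne_zero, by simp [gone, Matrix.one_mulVec]⟩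

lemma col_sq_pos (g : SL2) :
    0 < ((g : Matrix (Fin 2) (Fin 2) ℝ).mulVec e0 0) ^ 2
      + ((g : Matrix (Fin 2) (Fin 2) ℝ).mulVec e0 1) ^ 2 := by
  set w := (g : Matrix (Fin 2) (Fin 2) ℝ).mulVec e0 with hwdef
  rcases lt_or_eq_of_le (by positivity : (0:ℝ) ≤ w 0 ^ 2 + w 1 ^ 2) with h | h
  · exact h
  · exfalso
    have h0 : w 0 = 0 := by nlinarith [sq_nonneg (w 0), sq_nonneg (w 1)]
    have h1 : w 1 = 0 := by nlinarith [sq_nonneg (w 0), sq_nonneg (w 1)]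
    have hw : w = 0 := by funext i; fin_cases i <;> assumption
    have : e0 = (0 : Fin 2 → ℝ) := by
      have : ((g⁻¹ : SL2) : Matrix (Fin 2) (Fin 2) ℝ).mulVec w = e0 := by
        rw [hwdef, Matrix.mulVec_mulVec, coe_inv_mul_cancel, Matrix.one_mulVec]
      rw [hw, Matrix.mulVec_zero] at this
      exact this.symm
    have := congrFun this 0
    simp [e0] at this

lemma sl2_tendsto_iff (f : ℕ → SL2) (a : SL2) :
    Tendsto f atTop (𝓝 a) ↔
      Tendsto (fun n => ((f n : SL2) : Matrix (Fin 2) (Fin 2) ℝ)) atTop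
        (𝓝 (a : Matrix (Fin 2) (Fin 2) ℝ)) := by
  have h : (𝓝 a) = Filter.comap ((↑) : SL2 → Matrix (Fin 2) (Fin 2) ℝ)
      (𝓝 (a : Matrix (Fin 2) (Fin 2) ℝ)) := nhds_induced _ a
  rw [h]
  exact tendsto_comap_iff

end Stmt10Aux

/-- Any Chabauty limit of conjugates of the Borel subgroup `P = B ⋉ ℝ²` of `G` is again a
conjugate of `P`; in particular the set of conjugates of `P` is closed under Chabauty limits. -/
theorem stmt_10 (x : ℕ → GG) (H : Set GG) (hH : IsClosedSubgroup H)
    (hconv : ChabautyTendsto (fun n => conjSet (x n) Pset) H) :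
    ∃ y : GG, H = conjSet y Pset := by
  classical
  set w : ℕ → (Fin 2 → ℝ) := fun n => ((x n).1 : Matrix (Fin 2) (Fin 2) ℝ).mulVec e0 with hwdef
  have hpos : ∀ n, 0 < (w n 0) ^ 2 + (w n 1) ^ 2 := fun n => col_sq_pos _
  set r : ℕ → ℝ := fun n => Real.sqrt ((w n 0) ^ 2 + (w n 1) ^ 2) with hrdef
  have hrpos : ∀ n, 0 < r n := fun n => Real.sqrt_pos.2 (hpos n)
  set u : ℕ → (Fin 2 → ℝ) := fun n => (r n)⁻¹ • w n with hudef
  have huS : ∀ n, (u n 0) ^ 2 + (u n 1) ^ 2 = 1 := by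
    intro n
    have hsq : (r n) ^ 2 = (w n 0) ^ 2 + (w n 1) ^ 2 := Real.sq_sqrt (hpos n).le
    have hrne : r n ≠ 0 := (hrpos n).ne'
    show ((r n)⁻¹ * w n 0) ^ 2 + ((r n)⁻¹ * w n 1) ^ 2 = 1
    field_simp
    linarith [hsq]
  have hstab : ∀ n, conjSet (x n) Pset = Stab (u n) := by
    intro n
    rw [conjSet_Pset_eq_stab, hudef]
    exact (stab_smul _ (inv_ne_zero (hrpos n).ne') _).symm
  -- compactness: extract a convergent subsequence of the unit vectors u n
  set S : Set (Fin 2 → ℝ) := {v | v 0 ^ 2 + v 1 ^ 2 = 1} with hSdef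
  have hSsub : S ⊆ Metric.closedBall 0 1 := by
    intro v hv
    rw [Metric.mem_closedBall, dist_pi_le_iff zero_le_one]
    intro i
    simp only [Pi.zero_apply, Real.dist_eq, sub_zero]
    have hv' : v 0 ^ 2 + v 1 ^ 2 = 1 := hv
    have h2 : v i ^ 2 ≤ 1 := by
      fin_cases i
      · show v 0 ^ 2 ≤ 1
        nlinarith [sq_nonneg (v 1), hv']
      · show v 1 ^ 2 ≤ 1
        nlinarith [sq_nonneg (v 0), hv']
    rw [abs_le]
    constructor <;> nlinarith
  have hSb : Bornology.IsBounded S := Metric.isBounded_closedBall.subset hSsub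
  have hSc : IsClosed S := isClosed_eq
    (((continuous_apply (0 : Fin 2)).pow 2).add ((continuous_apply (1 : Fin 2)).pow 2))
    continuous_const
  obtain ⟨ul, hulS, k, hk, hulim⟩ := tendsto_subseq_of_bounded hSb (fun n => huS n : ∀ n, u n ∈ S)
  rw [hSc.closure_eq] at hulS
  have hul : ul 0 ^ 2 + ul 1 ^ 2 = 1 := hulS
  have hulim' : ∀ i, Tendsto (fun n => u (k n) i) atTop (𝓝 (ul i)) := by
    intro i
    exact (tendsto_pi_nhds.mp hulim i)
  -- the limit group element
  have hgdet : Matrix.det !![ul 0, -(ul 1); ul 1, ul 0] = 1 := by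
    rw [Matrix.det_fin_two_of]
    nlinarith [hul]
  set g : SL2 := ⟨!![ul 0, -(ul 1); ul 1, ul 0], hgdet⟩ with hgdef
  have hge0 : ((g : SL2) : Matrix (Fin 2) (Fin 2) ℝ).mulVec e0 = ul := by
    rw [mulVec_e0]
    funext i
    fin_cases i <;> simp [hgdef]
  refine ⟨(g, 0), ?_⟩
  rw [conjSet_Pset_eq_stab]
  show H = Stab (((g : SL2) : Matrix (Fin 2) (Fin 2) ℝ).mulVec e0)
  rw [hge0]
  apply Set.eq_of_subset_of_subset
  · -- H ⊆ Stab ul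
    intro h hh
    obtain ⟨v, hvmem, hvlim⟩ := hconv.1 h hh
    have hvmem' : ∀ n, ∃ c : ℝ, c ≠ 0 ∧
        ((v (k n)).1 : Matrix (Fin 2) (Fin 2) ℝ).mulVec (u (k n)) = c • u (k n) := by
      intro n
      have h4 : v (k n) ∈ conjSet (x (k n)) Pset := hvmem (k n)
      rw [hstab (k n)] at h4
      exact h4
    choose c hc0 hceq using hvmem'
    have hvlim' : Tendsto (fun n => v (k n)) atTop (𝓝 h) := hvlim.comp hk.tendsto_atTop
    have hm : Tendsto (fun n => ((v (k n)).1 : Matrix (Fin 2) (Fin 2) ℝ)) atTop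
        (𝓝 ((h.1 : SL2) : Matrix (Fin 2) (Fin 2) ℝ)) := by
      have h1 : Tendsto (fun n => (v (k n)).1) atTop (𝓝 h.1) :=
        (continuous_fst.tendsto h).comp hvlim'
      exact (sl2_tendsto_iff _ _).mp h1
    have hF : Tendsto (fun n => ((v (k n)).1 : Matrix (Fin 2) (Fin 2) ℝ).mulVec (u (k n)))
        atTop (𝓝 (((h.1 : SL2) : Matrix (Fin 2) (Fin 2) ℝ).mulVec ul)) := by
      have hcont : Continuous (fun p : Matrix (Fin 2) (Fin 2) ℝ × (Fin 2 → ℝ) =>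
          p.1.mulVec p.2) := continuous_fst.matrix_mulVec continuous_snd
      exact (hcont.tendsto _).comp (hm.prodMk_nhds hulim)
    have hFi : ∀ i, Tendsto
        (fun n => ((v (k n)).1 : Matrix (Fin 2) (Fin 2) ℝ).mulVec (u (k n)) i)
        atTop (𝓝 (((h.1 : SL2) : Matrix (Fin 2) (Fin 2) ℝ).mulVec ul i)) :=
      fun i => tendsto_pi_nhds.mp hF i
    set cl : ℝ := ((h.1 : SL2) : Matrix (Fin 2) (Fin 2) ℝ).mulVec ul 0 * ul 0
      + ((h.1 : SL2) : Matrix (Fin 2) (Fin 2) ℝ).mulVec ul 1 * ul 1 with hcldef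
    have hcval : ∀ n, c n =
        ((v (k n)).1 : Matrix (Fin 2) (Fin 2) ℝ).mulVec (u (k n)) 0 * u (k n) 0
        + ((v (k n)).1 : Matrix (Fin 2) (Fin 2) ℝ).mulVec (u (k n)) 1 * u (k n) 1 := by
      intro n
      rw [hceq n]
      simp only [Pi.smul_apply, smul_eq_mul]
      linear_combination (-(c n)) * huS (k n)
    have hclim : Tendsto c atTop (𝓝 cl) := by
      have := ((hFi 0).mul (hulim' 0)).add ((hFi 1).mul (hulim' 1))
      exact Tendsto.congr (fun n => (hcval n).symm) this
    have heq : ((h.1 : SL2) : Matrix (Fin 2) (Fin 2) ℝ).mulVec ul = cl • ul := by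
      funext i
      have h2 : Tendsto
          (fun n => ((v (k n)).1 : Matrix (Fin 2) (Fin 2) ℝ).mulVec (u (k n)) i)
          atTop (𝓝 (cl * ul i)) := by
        refine Tendsto.congr (fun n => ?_) (hclim.mul (hulim' i))
        rw [hceq n]
        simp
      have := tendsto_nhds_unique (hFi i) h2
      simpa using this
    have hclne : cl ≠ 0 := by
      intro h0
      rw [h0, zero_smul] at heq
      have hul0 : ul = 0 := by
        have h1 : ((h.1⁻¹ : SL2) : Matrix (Fin 2) (Fin 2) ℝ).mulVec
            (((h.1 : SL2) : Matrix (Fin 2) (Fin 2) ℝ).mulVec ul) = ul := by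
          rw [Matrix.mulVec_mulVec, coe_inv_mul_cancel, Matrix.one_mulVec]
        rw [heq, Matrix.mulVec_zero] at h1
        exact h1.symm
      rw [hul0] at hul
      norm_num at hul
    exact ⟨cl, hclne, heq⟩
  · -- Stab ul ⊆ H
    intro z hz
    obtain ⟨c, hc0, hzeq⟩ := hz
    set d : ℕ → ℝ := fun n => u (k n) 0 * ul 0 + u (k n) 1 * ul 1 with hddef
    have hd' : ∀ n, d n = u (k n) 0 * ul 0 + u (k n) 1 * ul 1 := fun n => rfl
    have hdlim : Tendsto d atTop (𝓝 1) := by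
      have h1 : Tendsto d atTop (𝓝 (ul 0 * ul 0 + ul 1 * ul 1)) :=
        ((hulim' 0).mul tendsto_const_nhds).add ((hulim' 1).mul tendsto_const_nhds)
      have h2 : ul 0 * ul 0 + ul 1 * ul 1 = 1 := by nlinarith [hul]
      rwa [h2] at h1
    have hdev : ∀ᶠ n in atTop, d n ≠ 0 := hdlim.eventually_ne one_ne_zero
    obtain ⟨N, hN⟩ := eventually_atTop.mp hdev
    set Q : ℕ → Matrix (Fin 2) (Fin 2) ℝ := fun n =>
      !![u (k n) 0 * ul 0 + ul 1 ^ 2 / d n, u (k n) 0 * ul 1 - ul 0 * ul 1 / d n;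
         u (k n) 1 * ul 0 - ul 0 * ul 1 / d n, u (k n) 1 * ul 1 + ul 0 ^ 2 / d n] with hQdef
    have hQdet : ∀ n, d n ≠ 0 → (Q n).det = 1 := by
      intro n hd
      have hdd := hd' n
      rw [hQdef]
      rw [Matrix.det_fin_two_of]
      field_simp
      linear_combination (d n * (u (k n) 0 * ul 0 + u (k n) 1 * ul 1)) * hul
        + (d n * (ul 0 ^ 2 + ul 1 ^ 2)) * hdd.symm
    have hQu : ∀ n, d n ≠ 0 → (Q n).mulVec ul = u (k n) := by
      intro n hd
      have hdd := hd' n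
      funext i
      rw [hQdef]
      fin_cases i
      · show (!![u (k n) 0 * ul 0 + ul 1 ^ 2 / d n, u (k n) 0 * ul 1 - ul 0 * ul 1 / d n;
            u (k n) 1 * ul 0 - ul 0 * ul 1 / d n,
            u (k n) 1 * ul 1 + ul 0 ^ 2 / d n]).mulVec ul 0 = u (k n) 0
        simp only [Matrix.mulVec, dotProduct, Fin.sum_univ_two, Matrix.cons_val',
          Matrix.cons_val_zero, Matrix.cons_val_one, Matrix.head_cons, Matrix.empty_val',
          Matrix.cons_val_fin_one, Matrix.head_fin_const, Matrix.of_apply]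
        field_simp
        linear_combination (u (k n) 0 * d n) * hul + (u (k n) 0) * hdd.symm
      · show (!![u (k n) 0 * ul 0 + ul 1 ^ 2 / d n, u (k n) 0 * ul 1 - ul 0 * ul 1 / d n;
            u (k n) 1 * ul 0 - ul 0 * ul 1 / d n,
            u (k n) 1 * ul 1 + ul 0 ^ 2 / d n]).mulVec ul 1 = u (k n) 1
        simp only [Matrix.mulVec, dotProduct, Fin.sum_univ_two, Matrix.cons_val',
          Matrix.cons_val_zero, Matrix.cons_val_one, Matrix.head_cons, Matrix.empty_val',
          Matrix.cons_val_fin_one, Matrix.head_fin_const, Matrix.of_apply]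
        field_simp
        linear_combination (u (k n) 1 * d n) * hul + (u (k n) 1) * hdd.symm
    set Qs : ℕ → SL2 := fun n => if hd : d n ≠ 0 then ⟨Q n, hQdet n hd⟩ else 1 with hQsdef
    have hQsmat : ∀ n, d n ≠ 0 → ((Qs n : SL2) : Matrix (Fin 2) (Fin 2) ℝ) = Q n := by
      intro n hd
      have hq : Qs n = ⟨Q n, hQdet n hd⟩ := dif_pos hd
      rw [hq]
    set zn : ℕ → GG := fun n => if d n ≠ 0 then ((Qs n) * z.1 * (Qs n)⁻¹, z.2) else gone
      with hzndef
    have hznmem : ∀ n, zn n ∈ conjSet (x (k n)) Pset := by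
      intro n
      rw [hstab (k n)]
      by_cases hd : d n ≠ 0
      · have hzn : zn n = ((Qs n) * z.1 * (Qs n)⁻¹, z.2) := by rw [hzndef]; simp only [if_pos hd]
        rw [hzn]
        refine ⟨c, hc0, ?_⟩
        show ((Qs n * z.1 * (Qs n)⁻¹ : SL2) : Matrix (Fin 2) (Fin 2) ℝ).mulVec (u (k n))
          = c • u (k n)
        have hinv : (((Qs n)⁻¹ : SL2) : Matrix (Fin 2) (Fin 2) ℝ).mulVec (u (k n)) = ul := by
          rw [← hQu n hd, Matrix.mulVec_mulVec, ← hQsmat n hd, coe_inv_mul_cancel,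
            Matrix.one_mulVec]
        rw [Matrix.SpecialLinearGroup.coe_mul, Matrix.SpecialLinearGroup.coe_mul,
          ← Matrix.mulVec_mulVec, ← Matrix.mulVec_mulVec, hinv, hzeq, Matrix.mulVec_smul,
          hQsmat n hd, hQu n hd]
      · have hzn : zn n = gone := by rw [hzndef]; simp only [if_neg hd]
        rw [hzn]
        exact gone_mem_stab _
    -- convergence of the matrices Q n to 1
    have hQlim : Tendsto Q atTop (𝓝 (1 : Matrix (Fin 2) (Fin 2) ℝ)) := by
      refine tendsto_pi_nhds.mpr ?_
      intro i
      rw [tendsto_pi_nhds]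
      intro j
      have hq00 : Tendsto (fun n => Q n 0 0) atTop (𝓝 (ul 0 * ul 0 + ul 1 ^ 2 / 1)) := by
        refine Tendsto.add ((hulim' 0).mul tendsto_const_nhds)
          (tendsto_const_nhds.div hdlim one_ne_zero) |>.congr (fun n => ?_)
        rw [hQdef]; simp
      have hq01 : Tendsto (fun n => Q n 0 1) atTop (𝓝 (ul 0 * ul 1 - ul 0 * ul 1 / 1)) := by
        refine Tendsto.sub ((hulim' 0).mul tendsto_const_nhds)
          (tendsto_const_nhds.div hdlim one_ne_zero) |>.congr (fun n => ?_)
        rw [hQdef]; simp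
      have hq10 : Tendsto (fun n => Q n 1 0) atTop (𝓝 (ul 1 * ul 0 - ul 0 * ul 1 / 1)) := by
        refine Tendsto.sub ((hulim' 1).mul tendsto_const_nhds)
          (tendsto_const_nhds.div hdlim one_ne_zero) |>.congr (fun n => ?_)
        rw [hQdef]; simp
      have hq11 : Tendsto (fun n => Q n 1 1) atTop (𝓝 (ul 1 * ul 1 + ul 0 ^ 2 / 1)) := by
        refine Tendsto.add ((hulim' 1).mul tendsto_const_nhds)
          (tendsto_const_nhds.div hdlim one_ne_zero) |>.congr (fun n => ?_)
        rw [hQdef]; simp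
      fin_cases i <;> fin_cases j
      · have hv : ul 0 * ul 0 + ul 1 ^ 2 / 1 = (1 : Matrix (Fin 2) (Fin 2) ℝ) 0 0 := by
          simp [Matrix.one_apply]
          nlinarith [hul]
        show Tendsto (fun n => Q n 0 0) atTop (𝓝 ((1 : Matrix (Fin 2) (Fin 2) ℝ) 0 0))
        rw [← hv]; exact hq00
      · have hv : ul 0 * ul 1 - ul 0 * ul 1 / 1 = (1 : Matrix (Fin 2) (Fin 2) ℝ) 0 1 := by
          simp [Matrix.one_apply]
        show Tendsto (fun n => Q n 0 1) atTop (𝓝 ((1 : Matrix (Fin 2) (Fin 2) ℝ) 0 1))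
        rw [← hv]; exact hq01
      · have hv : ul 1 * ul 0 - ul 0 * ul 1 / 1 = (1 : Matrix (Fin 2) (Fin 2) ℝ) 1 0 := by
          simp [Matrix.one_apply]
          ring
        show Tendsto (fun n => Q n 1 0) atTop (𝓝 ((1 : Matrix (Fin 2) (Fin 2) ℝ) 1 0))
        rw [← hv]; exact hq10
      · have hv : ul 1 * ul 1 + ul 0 ^ 2 / 1 = (1 : Matrix (Fin 2) (Fin 2) ℝ) 1 1 := by
          simp [Matrix.one_apply]
          nlinarith [hul]
        show Tendsto (fun n => Q n 1 1) atTop (𝓝 ((1 : Matrix (Fin 2) (Fin 2) ℝ) 1 1))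
        rw [← hv]; exact hq11
    have hentry : ∀ i j, Tendsto (fun n => Q n i j) atTop
        (𝓝 ((1 : Matrix (Fin 2) (Fin 2) ℝ) i j)) :=
      fun i j => tendsto_pi_nhds.mp (tendsto_pi_nhds.mp hQlim i) j
    have hadjlim : Tendsto (fun n => (Q n).adjugate) atTop
        (𝓝 (1 : Matrix (Fin 2) (Fin 2) ℝ)) := by
      have e00 : (1 : Matrix (Fin 2) (Fin 2) ℝ) 0 0 = 1 := by simp [Matrix.one_apply]
      have e11 : (1 : Matrix (Fin 2) (Fin 2) ℝ) 1 1 = 1 := by simp [Matrix.one_apply]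
      have e01 : (1 : Matrix (Fin 2) (Fin 2) ℝ) 0 1 = 0 := by simp [Matrix.one_apply]
      have e10 : (1 : Matrix (Fin 2) (Fin 2) ℝ) 1 0 = 0 := by simp [Matrix.one_apply]
      have h00 : Tendsto (fun n => (Q n).adjugate 0 0) atTop (𝓝 (1 : ℝ)) := by
        have h1 := hentry 1 1
        rw [e11] at h1
        exact h1.congr (fun n => by rw [Matrix.adjugate_fin_two]; simp)
      have h01 : Tendsto (fun n => (Q n).adjugate 0 1) atTop (𝓝 (0 : ℝ)) := by
        have h1 := (hentry 0 1).neg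
        rw [e01, neg_zero] at h1
        exact h1.congr (fun n => by rw [Matrix.adjugate_fin_two]; simp)
      have h10 : Tendsto (fun n => (Q n).adjugate 1 0) atTop (𝓝 (0 : ℝ)) := by
        have h1 := (hentry 1 0).neg
        rw [e10, neg_zero] at h1
        exact h1.congr (fun n => by rw [Matrix.adjugate_fin_two]; simp)
      have h11 : Tendsto (fun n => (Q n).adjugate 1 1) atTop (𝓝 (1 : ℝ)) := by
        have h1 := hentry 0 0
        rw [e00] at h1
        exact h1.congr (fun n => by rw [Matrix.adjugate_fin_two]; simp)
      refine tendsto_pi_nhds.mpr ?_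
      intro i
      rw [tendsto_pi_nhds]
      intro j
      fin_cases i <;> fin_cases j
      · show Tendsto (fun n => (Q n).adjugate 0 0) atTop (𝓝 ((1 : Matrix (Fin 2) (Fin 2) ℝ) 0 0))
        rw [e00]; exact h00
      · show Tendsto (fun n => (Q n).adjugate 0 1) atTop (𝓝 ((1 : Matrix (Fin 2) (Fin 2) ℝ) 0 1))
        rw [e01]; exact h01
      · show Tendsto (fun n => (Q n).adjugate 1 0) atTop (𝓝 ((1 : Matrix (Fin 2) (Fin 2) ℝ) 1 0))
        rw [e10]; exact h10
      · show Tendsto (fun n => (Q n).adjugate 1 1) atTop (𝓝 ((1 : Matrix (Fin 2) (Fin 2) ℝ) 1 1))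
        rw [e11]; exact h11
    have hzlim : Tendsto zn atTop (𝓝 z) := by
      have h1 : Tendsto (fun n => (zn n).1) atTop (𝓝 z.1) := by
        rw [sl2_tendsto_iff]
        have hmatlim : Tendsto (fun n => Q n * (z.1 : Matrix (Fin 2) (Fin 2) ℝ)
            * (Q n).adjugate) atTop (𝓝 ((z.1 : SL2) : Matrix (Fin 2) (Fin 2) ℝ)) := by
          have h2 := (hQlim.mul (tendsto_const_nhds :
            Tendsto (fun _ : ℕ => ((z.1 : SL2) : Matrix (Fin 2) (Fin 2) ℝ)) atTop _)).mul hadjlim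
          simpa using h2
        refine hmatlim.congr' ?_
        filter_upwards [eventually_ge_atTop N] with n hn
        have hd := hN n hn
        have hzn : zn n = ((Qs n) * z.1 * (Qs n)⁻¹, z.2) := by rw [hzndef]; simp only [if_pos hd]
        rw [hzn]
        show Q n * (z.1 : Matrix (Fin 2) (Fin 2) ℝ) * (Q n).adjugate
          = ((Qs n * z.1 * (Qs n)⁻¹ : SL2) : Matrix (Fin 2) (Fin 2) ℝ)
        rw [Matrix.SpecialLinearGroup.coe_mul, Matrix.SpecialLinearGroup.coe_mul,
          Matrix.SpecialLinearGroup.coe_inv, hQsmat n hd]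
      have h2 : Tendsto (fun n => (zn n).2) atTop (𝓝 z.2) := by
        refine Tendsto.congr' ?_ (tendsto_const_nhds : Tendsto (fun _ : ℕ => z.2) atTop _)
        filter_upwards [eventually_ge_atTop N] with n hn
        have hzn : zn n = ((Qs n) * z.1 * (Qs n)⁻¹, z.2) := by
          rw [hzndef]; simp only [if_pos (hN n hn)]
        rw [hzn]
      exact h1.prodMk_nhds h2
    exact hconv.2 k hk zn (fun n => hznmem n) z hzlim

end
end

section
/- Let G be a connected finite-dimensional real Lie group and let K be a maximal compact subgroup of G, i.e. a compact subgroup such that every compact subgroup of G containing K equals K. If the quotient space G/K (with the quotient topology and the natural left G-action) carries a G-invariant Borel probability measure, then G is compact. -/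
open MeasureTheory Set Pointwise

private lemma aux_exists_seq {α : Type*} (R : α → α → Prop)
    (h : ∀ s : Finset α, ∃ x, ∀ y ∈ s, R x y) :
    ∃ f : ℕ → α, ∀ m n : ℕ, m < n → R (f n) (f m) := by
  classical
  choose pick hpick using h
  let F : ℕ → Finset α := fun n => Nat.rec ∅ (fun _ s => insert (pick s) s) n
  have hmono : Monotone F := monotone_nat_of_le_succ fun n => Finset.subset_insert _ _
  refine ⟨fun n => pick (F n), fun m n hmn => ?_⟩
  exact hpick (F n) (pick (F m)) (hmono (Nat.succ_le_of_lt hmn) (Finset.mem_insert_self _ _))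

/-- If a connected finite-dimensional real Lie group `G` has a maximal compact subgroup `K`
such that `G/K` carries a `G`-invariant Borel probability measure, then `G` is compact. -/
theorem stmt_11 {E : Type*} [NormedAddCommGroup E] [NormedSpace ℝ E] [FiniteDimensional ℝ E]
    {G : Type*} [TopologicalSpace G] [ChartedSpace E G] [Group G]
    [LieGroup (modelWithCornersSelf ℝ E) (⊤ : ℕ∞) G] [ConnectedSpace G]
    (K : Subgroup G) (hKcomp : IsCompact (K : Set G))
    (hKmax : ∀ K' : Subgroup G, IsCompact (K' : Set G) → K ≤ K' → K' = K)
    [MeasurableSpace (G ⧸ K)] [BorelSpace (G ⧸ K)]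
    (μ : Measure (G ⧸ K)) [IsProbabilityMeasure μ]
    (hinv : ∀ g : G, ∀ S : Set (G ⧸ K), MeasurableSet S → μ ((fun p => g • p) '' S) = μ S) :
    CompactSpace G := by
  classical
  haveI : IsTopologicalGroup G := topologicalGroup_of_lieGroup (modelWithCornersSelf ℝ E) ((⊤ : ℕ∞) : WithTop ℕ∞)
  haveI : LocallyCompactSpace G := ChartedSpace.locallyCompactSpace E G
  by_contra hG
  haveI hnc : NoncompactSpace G := not_compactSpace_iff.mp hG
  obtain ⟨W, hWc, hWn⟩ := exists_compact_mem_nhds (1 : G)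
  have h1W : (1 : G) ∈ interior W := mem_interior_iff_mem_nhds.mpr hWn
  set π : G → G ⧸ K := QuotientGroup.mk with hπ
  set V : Set (G ⧸ K) := π '' interior W with hV
  have hVopen : IsOpen V := QuotientGroup.isOpenMap_coe (interior W) isOpen_interior
  have hVmeas : MeasurableSet V := hVopen.measurableSet
  have hμtrans : ∀ g : G, μ (g • V) = μ V := fun g => by
    rw [← Set.image_smul]; exact hinv g V hVmeas
  have hmemself : ∀ x : G, x ∈ x • interior W := fun x => by
    refine ⟨1, h1W, mul_one x⟩
  -- Step 1: μ V ≠ 0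
  have hμV : μ V ≠ 0 := by
    intro h0
    set Q : Set G := W ∪ W⁻¹ with hQ
    have hQc : IsCompact Q := hWc.union hWc.inv
    have h1Q : (1 : G) ∈ Q := Or.inl (interior_subset h1W)
    have hQpow : ∀ n : ℕ, IsCompact (Q ^ (n + 1)) := by
      intro n; induction n with
      | zero => simpa using hQc
      | succ n ih => rw [pow_succ]; exact ih.mul hQc
    set S : Set G := ⋃ n : ℕ, Q ^ (n + 1) with hS
    have key : ∀ A : Set G, (∀ x ∈ A, x • interior W ⊆ A) → IsOpen A := by
      intro A hA
      have hAeq : A = ⋃ x ∈ A, x • interior W :=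
        Set.Subset.antisymm (fun x hx => Set.mem_biUnion hx (hmemself x))
          (Set.iUnion₂_subset hA)
      rw [hAeq]
      exact isOpen_biUnion fun x _ => isOpen_interior.smul x
    have hSopen : IsOpen S := by
      refine key S ?_
      rintro x hx y ⟨w, hw, rfl⟩
      obtain ⟨n, hn⟩ := Set.mem_iUnion.mp hx
      refine Set.mem_iUnion.mpr ⟨n + 1, ?_⟩
      rw [pow_succ]
      exact Set.mul_mem_mul hn (Or.inl (interior_subset hw))
    have hScopen : IsOpen Sᶜ := by
      refine key Sᶜ ?_
      rintro x hx y ⟨w, hw, rfl⟩ hyS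
      apply hx
      obtain ⟨n, hn⟩ := Set.mem_iUnion.mp hyS
      refine Set.mem_iUnion.mpr ⟨n + 1, ?_⟩
      have : x • w * w⁻¹ ∈ Q ^ (n + 1) * Q :=
        Set.mul_mem_mul hn (Or.inr (Set.inv_mem_inv.mpr (interior_subset hw)))
      rw [pow_succ]
      simpa [smul_eq_mul, mul_assoc] using this
    have hSuniv : S = Set.univ := by
      have : IsClopen S := ⟨isOpen_compl_iff.mp hScopen, hSopen⟩
      exact this.eq_univ ⟨1, Set.mem_iUnion.mpr ⟨0, by simpa using h1Q⟩⟩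
    have hcover : ∀ n : ℕ, ∃ t : Finset G, Q ^ (n + 1) ⊆ ⋃ g ∈ t, g • interior W := by
      intro n
      exact (hQpow n).elim_finite_subcover (fun g : G => g • interior W)
        (fun g => isOpen_interior.smul g) (fun x _ => Set.mem_iUnion.mpr ⟨x, hmemself x⟩)
    choose t ht using hcover
    set T : Set G := ⋃ n : ℕ, (t n : Set G) with hT
    have hTc : T.Countable := Set.countable_iUnion fun n => (t n).countable_toSet
    have hnull : μ (⋃ g ∈ T, g • V) = 0 :=
      (measure_biUnion_null_iff hTc).mpr fun g _ => by rw [hμtrans g]; exact h0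
    have huniv : (Set.univ : Set (G ⧸ K)) ⊆ ⋃ g ∈ T, g • V := by
      rintro q -
      obtain ⟨x, rfl⟩ := QuotientGroup.mk_surjective q
      have hx : x ∈ S := hSuniv ▸ Set.mem_univ x
      obtain ⟨n, hn⟩ := Set.mem_iUnion.mp hx
      obtain ⟨g, hg, w, hw, rfl⟩ := by
        have := ht n hn
        simpa using Set.mem_iUnion₂.mp this
      refine Set.mem_biUnion (Set.mem_iUnion.mpr ⟨n, hg⟩) ?_
      exact ⟨π w, ⟨w, hw, rfl⟩, rfl⟩
    have : μ Set.univ = 0 := measure_mono_null huniv hnull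
    simp [measure_univ] at this
  -- Step 2: construct infinitely many disjoint translates
  set D : Set G := W * (K : Set G) * W⁻¹ with hD
  have hDc : IsCompact D := (hWc.mul hKcomp).mul hWc.inv
  have hstep : ∀ s : Finset G, ∃ x : G, ∀ y ∈ s, x ∉ y • D := by
    intro s
    have hB : IsCompact (⋃ y ∈ s, y • D) := by
      refine s.finite_toSet.isCompact_biUnion fun y _ => ?_
      rw [← Set.image_smul]
      exact hDc.image (continuous_const_smul y)
    obtain ⟨x, hx⟩ := Set.ne_univ_iff_exists_notMem _ |>.mp hB.ne_univ
    exact ⟨x, fun y hy hxy => hx (Set.mem_biUnion hy hxy)⟩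
  obtain ⟨c, hc⟩ := aux_exists_seq (fun x y : G => x ∉ y • D) hstep
  set U : ℕ → Set (G ⧸ K) := fun n => c n • V with hU
  have hUmeas : ∀ n, MeasurableSet (U n) := fun n => ((hVopen.smul (c n)).measurableSet)
  have hdisj : Pairwise (Function.onFun Disjoint U) := by
    rw [pairwise_disjoint_on]
    intro m n hmn
    rw [Set.disjoint_left]
    rintro q ⟨v, ⟨a, ha, rfl⟩, rfl⟩ hqn
    obtain ⟨v', ⟨b, hb, rfl⟩, hEq⟩ := hqn
    have hπeq : (QuotientGroup.mk (c n * b) : G ⧸ K) = QuotientGroup.mk (c m * a) := by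
      simpa [π, MulAction.Quotient.smul_mk, smul_eq_mul] using hEq
    have hk : (c n * b)⁻¹ * (c m * a) ∈ K := QuotientGroup.eq.mp hπeq
    refine hc m n hmn ?_
    refine ⟨a * ((c m * a)⁻¹ * (c n * b)) * b⁻¹, ?_, ?_⟩
    · refine Set.mul_mem_mul (Set.mul_mem_mul (interior_subset ha) ?_) ?_
      · have : ((c n * b)⁻¹ * (c m * a))⁻¹ ∈ K := inv_mem hk
        simpa [mul_assoc] using this
      · exact Set.inv_mem_inv.mpr (interior_subset hb)
    · simp [smul_eq_mul]
      group
  have hsum : μ (⋃ n, U n) = ∑' n : ℕ, μ (U n) := measure_iUnion hdisj hUmeas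
  have htop : (⊤ : ENNReal) ≤ 1 := by
    calc (⊤ : ENNReal) = ∑' _ : ℕ, μ V := (ENNReal.tsum_const_eq_top_of_ne_zero hμV).symm
      _ = ∑' n : ℕ, μ (U n) := by
          refine tsum_congr fun n => ?_
          rw [hU]
          exact (hμtrans (c n)).symm
      _ = μ (⋃ n, U n) := hsum.symm
      _ ≤ μ Set.univ := measure_mono (Set.subset_univ _)
      _ = 1 := measure_univ
  simp at htop
end

section
/- Let L = SL(2,ℝ) × {0} ⊆ G and set x_n = (I, (n, 0)) ∈ G for n ∈ ℕ. Then the conjugates x_n L x_n⁻¹ converge in the Chabauty sense to the closed subgroup N⁺ ⋉ ℝ² = {((1, s; 0, 1), v) : s ∈ ℝ, v ∈ ℝ²}. In particular, the set of conjugates of L is not closed under Chabauty limits. -/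
open Filter Topology

noncomputable section

lemma mem_NplusR2_iff (x : GG) : x ∈ NplusR2 ↔
    (x.1 : Matrix (Fin 2) (Fin 2) ℝ) 0 0 = 1 ∧ (x.1 : Matrix (Fin 2) (Fin 2) ℝ) 1 0 = 0 ∧
      (x.1 : Matrix (Fin 2) (Fin 2) ℝ) 1 1 = 1 := by
  constructor
  · rintro ⟨s, hs⟩
    rw [hs]
    simp
  · rintro ⟨h1, h2, h3⟩
    refine ⟨(x.1 : Matrix (Fin 2) (Fin 2) ℝ) 0 1, ?_⟩
    conv_lhs => rw [Matrix.eta_fin_two (x.1 : Matrix (Fin 2) (Fin 2) ℝ)]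
    rw [h1, h2, h3]

lemma tendsto_SL2 {f : ℕ → SL2} {g : SL2} :
    Tendsto f atTop (𝓝 g) ↔
      Tendsto (fun n => ((f n : Matrix (Fin 2) (Fin 2) ℝ))) atTop (𝓝 (g : Matrix (Fin 2) (Fin 2) ℝ)) := by
  exact (Topology.IsInducing.induced ((↑) : SL2 → Matrix (Fin 2) (Fin 2) ℝ)).tendsto_nhds_iff

lemma conj_transl (w : Fin 2 → ℝ) (γ : SL2) :
    gmul (gmul ((1 : SL2), w) (γ, 0)) (ginv ((1 : SL2), w)) =
      (γ, w - (γ : Matrix (Fin 2) (Fin 2) ℝ).mulVec w) := by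
  simp [gmul, ginv, Matrix.mulVec_neg, sub_eq_add_neg]

def gA (s v₁ v₂ : ℝ) (n : ℕ) : SL2 :=
  if hn : (1 : ℝ) - v₁ / n = 0 then 1 else
    ⟨!![1 - v₁/n, s; -(v₂/n), (1 - s*(v₂/n))/(1 - v₁/n)], by
      rw [Matrix.det_fin_two_of]; field_simp; ring⟩

/-- With `x_n = (I,(n,0))`, the conjugates `x_n L x_n⁻¹` of the Levi subgroup `L` converge in
the Chabauty sense to the closed subgroup `N⁺ ⋉ ℝ²`; in particular the set of conjugates of `L`
is not closed under Chabauty limits. -/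
theorem stmt_12 :
    ChabautyTendsto (fun n => conjSet ((1 : SL2), ![(n : ℝ), 0]) Lset) NplusR2 ∧
      IsClosedSubgroup NplusR2 ∧ ∀ y : GG, conjSet y Lset ≠ NplusR2 := by
  refine ⟨⟨?_, ?_⟩, ⟨?_, ?_, ?_, ?_⟩, ?_⟩
  · -- (i)
    rintro ⟨g, v⟩ ⟨s, hs⟩
    set v₁ := v 0 with hv1
    set v₂ := v 1 with hv2
    refine ⟨fun n => gmul (gmul ((1 : SL2), ![(n : ℝ), 0]) (gA s v₁ v₂ n, 0))
      (ginv ((1 : SL2), ![(n : ℝ), 0])), fun n => ⟨(gA s v₁ v₂ n, 0), rfl, rfl⟩, ?_⟩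
    have hcond : ∀ᶠ n : ℕ in atTop, (1 : ℝ) - v₁ / n ≠ 0 ∧ (n : ℝ) ≠ 0 := by
      filter_upwards [eventually_gt_atTop (Nat.ceil |v₁|), eventually_gt_atTop 0] with n hn hn0
      have hnR : |v₁| < (n : ℝ) := lt_of_le_of_lt (Nat.le_ceil _) (by exact_mod_cast hn)
      have hnpos : (0:ℝ) < n := by exact_mod_cast hn0
      have habs : |v₁ / n| < 1 := by
        rw [abs_div, abs_of_pos hnpos, div_lt_one hnpos]; exact hnR
      refine ⟨?_, ne_of_gt hnpos⟩
      intro h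
      rw [(sub_eq_zero.mp h).symm] at habs
      simp at habs
    have hkey : ∀ᶠ n : ℕ in atTop,
        gmul (gmul ((1 : SL2), ![(n : ℝ), 0]) (gA s v₁ v₂ n, 0))
          (ginv ((1 : SL2), ![(n : ℝ), 0])) = (gA s v₁ v₂ n, v) := by
      filter_upwards [hcond] with n ⟨hn, hn0⟩
      rw [conj_transl]
      congr 1
      have hco : ((gA s v₁ v₂ n : SL2) : Matrix (Fin 2) (Fin 2) ℝ) =
          !![1 - v₁/n, s; -(v₂/n), (1 - s*(v₂/n))/(1 - v₁/n)] := by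
        simp [gA, hn]
      rw [hco]
      funext i
      fin_cases i <;>
        simp [Matrix.mulVec, dotProduct, Fin.sum_univ_two, Matrix.cons_val_zero,
          Matrix.cons_val_one] <;> field_simp <;> ring
    rw [tendsto_congr' hkey]
    have hG : Tendsto (fun n => gA s v₁ v₂ n) atTop (𝓝 g) := by
      rw [tendsto_SL2, hs]
      have hco : ∀ᶠ n : ℕ in atTop, ((gA s v₁ v₂ n : SL2) : Matrix (Fin 2) (Fin 2) ℝ) =
          !![1 - v₁/n, s; -(v₂/n), (1 - s*(v₂/n))/(1 - v₁/n)] := by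
        filter_upwards [hcond] with n ⟨hn, _⟩
        simp [gA, hn]
      rw [tendsto_congr' hco]
      have h1 : Tendsto (fun n : ℕ => (1:ℝ) - v₁ / n) atTop (𝓝 1) := by
        have := (tendsto_const_nhds (α := ℕ) (x := (1:ℝ))).sub
          (tendsto_const_div_atTop_nhds_zero_nat v₁)
        simpa using this
      have h2 : Tendsto (fun n : ℕ => -(v₂ / (n:ℝ))) atTop (𝓝 0) := by
        have := (tendsto_const_div_atTop_nhds_zero_nat v₂).neg
        simpa using this
      have h3 : Tendsto (fun n : ℕ => ((1:ℝ) - s*(v₂/n))/(1 - v₁/n)) atTop (𝓝 1) := by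
        have hnum : Tendsto (fun n : ℕ => (1:ℝ) - s*(v₂/n)) atTop (𝓝 1) := by
          have := (tendsto_const_nhds (α := ℕ) (x := (1:ℝ))).sub
            ((tendsto_const_nhds (α := ℕ) (x := s)).mul (tendsto_const_div_atTop_nhds_zero_nat v₂))
          simpa using this
        have : Tendsto (fun n : ℕ => ((1:ℝ) - s*(v₂/n))/(1 - v₁/n)) atTop (𝓝 (1/1)) :=
          hnum.div h1 one_ne_zero
        simpa only [div_one] using this
      refine tendsto_pi_nhds.mpr fun i => tendsto_pi_nhds.mpr fun j => ?_
      fin_cases i <;> fin_cases j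
      · simpa using h1
      · simpa using tendsto_const_nhds
      · simpa using h2
      · simpa using h3
    exact hG.prodMk_nhds tendsto_const_nhds
  · -- (ii)
    intro k hk u hu x hx
    choose a haL hae using hu
    have hform : ∀ n, u n = ((a n).1,
        ![(k n : ℝ), 0] - ((a n).1 : Matrix (Fin 2) (Fin 2) ℝ).mulVec ![(k n : ℝ), 0]) := by
      intro n
      rw [← hae n]
      have h0 : a n = ((a n).1, 0) := Prod.ext rfl (haL n)
      rw [h0]
      exact conj_transl _ _
    have hx1 : Tendsto (fun n => ((a n).1 : Matrix (Fin 2) (Fin 2) ℝ)) atTop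
        (𝓝 (x.1 : Matrix (Fin 2) (Fin 2) ℝ)) := by
      have : Tendsto (fun n => (u n).1) atTop (𝓝 x.1) :=
        (continuous_fst.tendsto x).comp hx
      rw [← tendsto_SL2]
      refine this.congr fun n => ?_
      rw [hform n]
    have hx2 : ∀ i, Tendsto (fun n => (u n).2 i) atTop (𝓝 (x.2 i)) := by
      intro i
      have : Tendsto (fun n => (u n).2) atTop (𝓝 x.2) := (continuous_snd.tendsto x).comp hx
      exact (tendsto_pi_nhds.mp this) i
    have hkinv : Tendsto (fun n => ((k n : ℝ))⁻¹) atTop (𝓝 0) :=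
      tendsto_inv_atTop_zero.comp (tendsto_natCast_atTop_atTop.comp hk.tendsto_atTop)
    have hne : ∀ᶠ n : ℕ in atTop, (k n : ℝ) ≠ 0 := by
      filter_upwards [eventually_gt_atTop 0] with n hn
      have : 0 < k n := lt_of_lt_of_le hn hk.le_apply
      positivity
    -- entry (0,0)
    have e00 : (x.1 : Matrix (Fin 2) (Fin 2) ℝ) 0 0 = 1 := by
      have hA : Tendsto (fun n => ((a n).1 : Matrix (Fin 2) (Fin 2) ℝ) 0 0) atTop
          (𝓝 ((x.1 : Matrix (Fin 2) (Fin 2) ℝ) 0 0)) :=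
        ((tendsto_pi_nhds.mp ((tendsto_pi_nhds.mp hx1) 0)) 0)
      have hEq : ∀ᶠ n : ℕ in atTop,
          ((a n).1 : Matrix (Fin 2) (Fin 2) ℝ) 0 0 = 1 - (u n).2 0 * ((k n : ℝ))⁻¹ := by
        filter_upwards [hne] with n hn
        have h2 : (u n).2 0 = (k n : ℝ) - ((a n).1 : Matrix (Fin 2) (Fin 2) ℝ) 0 0 * (k n : ℝ) := by
          rw [hform n]
          simp [Matrix.mulVec, dotProduct, Fin.sum_univ_two]
        rw [h2]
        field_simp
        ring
      have hlim : Tendsto (fun n => 1 - (u n).2 0 * ((k n : ℝ))⁻¹) atTop (𝓝 1) := by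
        have := (tendsto_const_nhds (α := ℕ) (x := (1:ℝ))).sub ((hx2 0).mul hkinv)
        simpa using this
      exact tendsto_nhds_unique hA (hlim.congr' (Filter.EventuallyEq.symm hEq))
    have e10 : (x.1 : Matrix (Fin 2) (Fin 2) ℝ) 1 0 = 0 := by
      have hA : Tendsto (fun n => ((a n).1 : Matrix (Fin 2) (Fin 2) ℝ) 1 0) atTop
          (𝓝 ((x.1 : Matrix (Fin 2) (Fin 2) ℝ) 1 0)) :=
        ((tendsto_pi_nhds.mp ((tendsto_pi_nhds.mp hx1) 1)) 0)
      have hEq : ∀ᶠ n : ℕ in atTop,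
          ((a n).1 : Matrix (Fin 2) (Fin 2) ℝ) 1 0 = -((u n).2 1) * ((k n : ℝ))⁻¹ := by
        filter_upwards [hne] with n hn
        have h2 : (u n).2 1 = -(((a n).1 : Matrix (Fin 2) (Fin 2) ℝ) 1 0 * (k n : ℝ)) := by
          rw [hform n]
          simp [Matrix.mulVec, dotProduct, Fin.sum_univ_two]
        rw [h2]
        field_simp
      have hlim : Tendsto (fun n => -((u n).2 1) * ((k n : ℝ))⁻¹) atTop (𝓝 0) := by
        have := ((hx2 1).neg.mul hkinv)
        simpa using this
      exact tendsto_nhds_unique hA (hlim.congr' (Filter.EventuallyEq.symm hEq))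
    have hdet := x.1.prop
    rw [Matrix.det_fin_two, e00, e10] at hdet
    rw [mem_NplusR2_iff]
    exact ⟨e00, e10, by linarith⟩
  · -- closed
    have : NplusR2 = (fun x : GG => ((x.1 : Matrix (Fin 2) (Fin 2) ℝ) 0 0,
        (x.1 : Matrix (Fin 2) (Fin 2) ℝ) 1 0, (x.1 : Matrix (Fin 2) (Fin 2) ℝ) 1 1)) ⁻¹'
          {((1:ℝ), (0:ℝ), (1:ℝ))} := by
      ext x
      rw [Set.mem_preimage, Set.mem_singleton_iff, mem_NplusR2_iff, Prod.ext_iff, Prod.ext_iff]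
    rw [this]
    have hc : Continuous (fun x : GG => (x.1 : Matrix (Fin 2) (Fin 2) ℝ)) :=
      continuous_induced_dom.comp continuous_fst
    exact IsClosed.preimage
      (((((continuous_apply _).comp (continuous_apply _)).comp hc).prodMk
        ((((continuous_apply _).comp (continuous_apply _)).comp hc).prodMk
          (((continuous_apply _).comp (continuous_apply _)).comp hc)))) isClosed_singleton
  · -- one
    rw [mem_NplusR2_iff]
    simp [gone, Matrix.one_fin_two]
  · -- mul
    intro p hp q hq
    rw [mem_NplusR2_iff] at *
    obtain ⟨p1, p2, p3⟩ := hp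
    obtain ⟨q1, q2, q3⟩ := hq
    refine ⟨?_, ?_, ?_⟩ <;>
      simp [gmul, Matrix.mul_apply, Fin.sum_univ_two, p1, p2, p3, q1, q2, q3]
  · -- inv
    intro p hp
    rw [mem_NplusR2_iff] at *
    obtain ⟨p1, p2, p3⟩ := hp
    refine ⟨?_, ?_, ?_⟩ <;>
      simp [ginv, Matrix.SpecialLinearGroup.coe_inv, Matrix.adjugate_fin_two, p1, p2, p3]
  · -- not a conjugate
    intro y heq
    set J : SL2 := ⟨!![0,-1;1,0], by simp [Matrix.det_fin_two_of]⟩ with hJ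
    have hmem : gmul (gmul y ((y.1⁻¹ * J * y.1), (0 : Fin 2 → ℝ))) (ginv y) ∈ conjSet y Lset :=
      ⟨(y.1⁻¹ * J * y.1, 0), rfl, rfl⟩
    rw [heq, mem_NplusR2_iff] at hmem
    have h1 : (gmul (gmul y ((y.1⁻¹ * J * y.1), (0 : Fin 2 → ℝ))) (ginv y)).1 = J := by
      simp only [gmul, ginv]
      group
    rw [h1] at hmem
    simp [hJ] at hmem

end
end

section
/- Let K = {(R_θ, 0) : θ ∈ ℝ} ⊆ G, where R_θ is the rotation matrix (cos θ, sin θ; −sin θ, cos θ), and set g_n = ((1, n; 0, 1), 0) ∈ G for n ∈ ℕ. Then the conjugates g_n K g_n⁻¹ converge in the Chabauty sense to the closed subgroup Ñ⁺ = {(±(1, s; 0, 1), 0) : s ∈ ℝ}. -/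
open Filter Topology

noncomputable section

namespace Stmt13Aux

open Matrix Real

local notation "M2" => Matrix (Fin 2) (Fin 2) ℝ

lemma sl2_coe_cont : Continuous ((↑) : SL2 → M2) := continuous_induced_dom

lemma entry_cont (i j : Fin 2) : Continuous (fun x : GG => ((x.1 : M2)) i j) :=
  ((continuous_apply j).comp ((continuous_apply i).comp sl2_coe_cont)).comp continuous_fst

lemma tendsto_matrix_iff {l : Filter ℕ} {f : ℕ → M2} {A : M2} :
    Filter.Tendsto f l (nhds A) ↔ ∀ i j, Filter.Tendsto (fun a => f a i j) l (nhds (A i j)) := by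
  exact tendsto_pi_nhds.trans (forall_congr' fun i => tendsto_pi_nhds)

lemma tendsto_GG_iff {l : Filter ℕ} {u : ℕ → GG} {x : GG} :
    Filter.Tendsto u l (nhds x) ↔
      (∀ i j, Filter.Tendsto (fun n => ((u n).1 : M2) i j) l (nhds ((x.1 : M2) i j))) ∧
        Filter.Tendsto (fun n => (u n).2) l (nhds x.2) := by
  obtain ⟨x1, x2⟩ := x
  rw [nhds_prod_eq, Filter.tendsto_prod_iff']
  simp only [nhds_induced, Filter.tendsto_comap_iff]
  exact and_congr_left' tendsto_matrix_iff

/-- rotation element of SL2 -/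
def rotSL (θ : ℝ) : SL2 :=
  ⟨!![Real.cos θ, Real.sin θ; -Real.sin θ, Real.cos θ], by
    simp [Matrix.det_fin_two_of]; nlinarith [Real.sin_sq_add_cos_sq θ]⟩

lemma mem_Kset_iff {x : GG} : x ∈ Kset ↔ ∃ θ : ℝ, x = (rotSL θ, 0) := by
  constructor
  · rintro ⟨θ, h1, h2⟩
    exact ⟨θ, Prod.ext (Subtype.ext h1) h2⟩
  · rintro ⟨θ, rfl⟩
    exact ⟨θ, rfl, rfl⟩

lemma conj_eq (n θ : ℝ) :
    gmul (gmul (upperUnipotent n, 0) (rotSL θ, 0)) (ginv (upperUnipotent n, 0)) =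
      ((upperUnipotent n) * (rotSL θ) * (upperUnipotent n)⁻¹, 0) := by
  simp [gmul, ginv, Matrix.mulVec_zero, mul_assoc]

lemma conj_coe (n θ : ℝ) :
    (((upperUnipotent n) * (rotSL θ) * (upperUnipotent n)⁻¹ : SL2) : M2) =
      !![Real.cos θ - n * Real.sin θ, (1 + n ^ 2) * Real.sin θ;
         -Real.sin θ, Real.cos θ + n * Real.sin θ] := by
  have hinv : (((upperUnipotent n)⁻¹ : SL2) : M2) = !![1, -n; 0, 1] := by
    rw [Matrix.SpecialLinearGroup.coe_inv]
    simp [upperUnipotent, Matrix.adjugate_fin_two_of]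
  rw [Matrix.SpecialLinearGroup.coe_mul, Matrix.SpecialLinearGroup.coe_mul, hinv]
  show (!![1, n; 0, 1] : M2) * !![Real.cos θ, Real.sin θ; -Real.sin θ, Real.cos θ] *
      !![1, -n; 0, 1] = _
  rw [Matrix.mul_fin_two, Matrix.mul_fin_two]
  ext i j
  fin_cases i <;> fin_cases j <;> simp <;> ring

lemma mem_conj_iff {n : ℝ} {x : GG} :
    x ∈ conjSet (upperUnipotent n, 0) Kset ↔
      ∃ θ : ℝ, (x.1 : M2) =
        !![Real.cos θ - n * Real.sin θ, (1 + n ^ 2) * Real.sin θ;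
           -Real.sin θ, Real.cos θ + n * Real.sin θ] ∧ x.2 = 0 := by
  constructor
  · rintro ⟨h, hK, rfl⟩
    obtain ⟨θ, rfl⟩ := mem_Kset_iff.1 hK
    dsimp only
    rw [conj_eq]
    exact ⟨θ, conj_coe n θ, rfl⟩
  · rintro ⟨θ, h1, h2⟩
    refine ⟨(rotSL θ, 0), mem_Kset_iff.2 ⟨θ, rfl⟩, ?_⟩
    dsimp only
    rw [conj_eq]
    refine Prod.ext (Subtype.ext ?_) h2.symm
    rw [conj_coe, h1]

lemma mem_Ntilde_of {x : GG} (h2 : x.2 = 0) (h10 : (x.1 : M2) 1 0 = 0)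
    (hdiag : (x.1 : M2) 0 0 = (x.1 : M2) 1 1) : x ∈ Ntilde := by
  have hdet : (x.1 : M2) 0 0 * (x.1 : M2) 1 1 - (x.1 : M2) 0 1 * (x.1 : M2) 1 0 = 1 := by
    rw [← Matrix.det_fin_two]; exact x.1.2
  rw [h10, mul_zero, sub_zero, ← hdiag] at hdet
  have hsq : (x.1 : M2) 0 0 = 1 ∨ (x.1 : M2) 0 0 = -1 := by
    rcases mul_self_eq_one_iff.1 hdet with h | h
    · exact Or.inl h
    · exact Or.inr h
  refine ⟨⟨(x.1 : M2) 0 0 * (x.1 : M2) 0 1, ?_⟩, h2⟩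
  rcases hsq with h | h
  · left
    rw [Matrix.eta_fin_two (x.1 : M2), h, ← hdiag, h, h10]
    norm_num
  · right
    rw [Matrix.eta_fin_two (x.1 : M2), h, ← hdiag, h, h10]
    ext i j
    fin_cases i <;> fin_cases j <;> simp <;> ring

lemma Ntilde_eq : Ntilde =
    {x : GG | (x.1 : M2) 1 0 = 0} ∩ {x : GG | (x.1 : M2) 0 0 = (x.1 : M2) 1 1} ∩
      {x : GG | x.2 = 0} := by
  ext x
  constructor
  · rintro ⟨⟨s, h | h⟩, h2⟩ <;> refine ⟨⟨?_, ?_⟩, h2⟩ <;>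
      simp only [Set.mem_setOf_eq, h] <;> simp
  · rintro ⟨⟨h10, hdiag⟩, h2⟩
    exact mem_Ntilde_of h2 h10 hdiag

lemma isClosedSubgroup_Ntilde : IsClosedSubgroup Ntilde := by
  refine ⟨?_, ?_, ?_, ?_⟩
  · rw [Ntilde_eq]
    refine (IsClosed.inter (IsClosed.inter ?_ ?_) ?_)
    · exact isClosed_eq (entry_cont 1 0) continuous_const
    · exact isClosed_eq (entry_cont 0 0) (entry_cont 1 1)
    · exact isClosed_eq continuous_snd continuous_const
  · exact ⟨⟨0, Or.inl (by simp [gone, Matrix.one_fin_two])⟩, rfl⟩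
  · rintro a ⟨⟨s, hs⟩, ha2⟩ b ⟨⟨t, ht⟩, hb2⟩
    have h1 : (gmul a b).1 = a.1 * b.1 := rfl
    have h2 : (gmul a b).2 = 0 := by
      simp [gmul, ha2, hb2, Matrix.mulVec_zero]
    refine ⟨⟨s + t, ?_⟩, h2⟩
    rw [h1, Matrix.SpecialLinearGroup.coe_mul]
    rcases hs with hs | hs <;> rcases ht with ht | ht <;> rw [hs, ht] <;>
      [left; right; right; left] <;> (ext i j; fin_cases i <;> fin_cases j <;> simp <;> ring)
  · rintro a ⟨⟨s, hs⟩, ha2⟩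
    have h2 : (ginv a).2 = 0 := by simp [ginv, ha2, Matrix.mulVec_zero]
    have h1 : ((ginv a).1 : M2) = Matrix.adjugate (a.1 : M2) := by
      show ((a.1⁻¹ : SL2) : M2) = _
      rw [Matrix.SpecialLinearGroup.coe_inv]
    refine ⟨⟨-s, ?_⟩, h2⟩
    rcases hs with hs | hs
    · left
      rw [h1, hs, Matrix.adjugate_fin_two_of]
      norm_num
    · right
      rw [h1, hs, show (-!![(1:ℝ), s; 0, 1]) = !![-1, -s; 0, -1] by
        ext i j; fin_cases i <;> fin_cases j <;> simp, Matrix.adjugate_fin_two_of]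
      ext i j; fin_cases i <;> fin_cases j <;> simp

end Stmt13Aux

namespace Stmt13Aux

lemma tendsto_one_add_sq : Filter.Tendsto (fun n : ℕ => 1 + (n:ℝ)^2) atTop atTop := by
  apply tendsto_atTop_mono (fun n : ℕ => ?_) tendsto_natCast_atTop_atTop
  nlinarith [sq_nonneg ((n:ℝ) - 1)]

lemma tendsto_aux (s : ℝ) : Filter.Tendsto (fun n : ℕ => s / (1 + (n:ℝ)^2)) atTop (nhds 0) := by
  simpa [div_eq_mul_inv] using tendsto_one_add_sq.inv_tendsto_atTop.const_mul s

lemma tendsto_aux2 (s : ℝ) :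
    Filter.Tendsto (fun n : ℕ => (n:ℝ) * (s / (1 + (n:ℝ)^2))) atTop (nhds 0) := by
  apply squeeze_zero_norm (fun n => ?_) (tendsto_const_div_atTop_nhds_zero_nat |s|)
  rcases Nat.eq_zero_or_pos n with rfl | hn
  · simp
  · have h1 : (0:ℝ) < n := by exact_mod_cast hn
    have h2 : (0:ℝ) < 1 + (n:ℝ)^2 := by positivity
    rw [Real.norm_eq_abs, abs_mul, abs_div, abs_of_pos h1, abs_of_pos h2,
      show (n:ℝ) * (|s| / (1 + (n:ℝ)^2)) = ((n:ℝ) * |s|) / (1 + (n:ℝ)^2) from by ring,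
      div_le_div_iff₀ h2 h1]
    nlinarith [abs_nonneg s]

lemma abs_le_one (s : ℝ) {n : ℕ} (hn : ⌈|s|⌉₊ ≤ n) : |s / (1 + (n:ℝ)^2)| ≤ 1 := by
  have h2 : (0:ℝ) < 1 + (n:ℝ)^2 := by positivity
  rw [abs_div, abs_of_pos h2, div_le_one h2]
  have := Nat.le_ceil |s|
  have h3 : ((⌈|s|⌉₊ : ℕ) : ℝ) ≤ (n : ℝ) := by exact_mod_cast hn
  nlinarith [sq_nonneg ((n:ℝ) - 1)]

end Stmt13Aux

/-- With `g_n = ((1,n;0,1), 0)`, the conjugates `g_n K g_n⁻¹` converge in the Chabauty sense to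
the closed subgroup `Ñ⁺`. -/
theorem stmt_13 :
    ChabautyTendsto (fun n => conjSet (upperUnipotent (n : ℝ), 0) Kset) Ntilde ∧
      IsClosedSubgroup Ntilde := by
  refine ⟨⟨?_, ?_⟩, Stmt13Aux.isClosedSubgroup_Ntilde⟩
  · rintro h ⟨⟨s, hmat | hmat⟩, h2⟩
    · set θ : ℕ → ℝ := fun n => Real.arcsin (s / (1 + (n:ℝ)^2)) with hθdef
      refine ⟨fun n => gmul (gmul (upperUnipotent (n : ℝ), 0) (Stmt13Aux.rotSL (θ n), 0))
          (ginv (upperUnipotent (n : ℝ), 0)),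
        fun n => ⟨_, Stmt13Aux.mem_Kset_iff.2 ⟨θ n, rfl⟩, rfl⟩, ?_⟩
      rw [Stmt13Aux.tendsto_GG_iff]
      have hθ0 : Tendsto θ atTop (𝓝 0) := by
        simpa [Function.comp_def] using (Real.continuous_arcsin.tendsto 0).comp (Stmt13Aux.tendsto_aux s)
      have hsin : Tendsto (fun n => Real.sin (θ n)) atTop (𝓝 0) := by
        simpa [Function.comp_def] using (Real.continuous_sin.tendsto 0).comp hθ0
      have hcos : Tendsto (fun n => Real.cos (θ n)) atTop (𝓝 1) := by
        simpa [Function.comp_def] using (Real.continuous_cos.tendsto 0).comp hθ0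
      have hev : ∀ᶠ n : ℕ in atTop, Real.sin (θ n) = s / (1 + (n:ℝ)^2) := by
        filter_upwards [Filter.eventually_ge_atTop ⌈|s|⌉₊] with n hn
        have h1 := Stmt13Aux.abs_le_one s hn
        rw [abs_le] at h1
        exact Real.sin_arcsin h1.1 h1.2
      have hns : Tendsto (fun n : ℕ => (n:ℝ) * Real.sin (θ n)) atTop (𝓝 0) := by
        apply (Stmt13Aux.tendsto_aux2 s).congr'
        filter_upwards [hev] with n hn
        rw [hn]
      have h01 : Tendsto (fun n : ℕ => (1 + (n:ℝ)^2) * Real.sin (θ n)) atTop (𝓝 s) := by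
        apply tendsto_const_nhds.congr'
        filter_upwards [hev] with n hn
        rw [hn]
        have : (1 : ℝ) + (n:ℝ)^2 ≠ 0 := by positivity
        field_simp
        try ring
      have hcoe : ∀ n : ℕ,
          (((gmul (gmul (upperUnipotent (n : ℝ), 0) (Stmt13Aux.rotSL (θ n), 0))
            (ginv (upperUnipotent (n : ℝ), 0))).1 : Matrix (Fin 2) (Fin 2) ℝ)) =
          !![Real.cos (θ n) - n * Real.sin (θ n), (1 + (n:ℝ)^2) * Real.sin (θ n);
             -Real.sin (θ n), Real.cos (θ n) + n * Real.sin (θ n)] := fun n => by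
        rw [Stmt13Aux.conj_eq]; exact Stmt13Aux.conj_coe _ _
      constructor
      · intro i j
        fin_cases i <;> fin_cases j
        · simp only [hcoe, hmat]
          simpa using hcos.sub hns
        · simp only [hcoe, hmat]
          simpa using h01
        · simp only [hcoe, hmat]
          simpa using hsin.neg
        · simp only [hcoe, hmat]
          simpa using hcos.add hns
      · rw [h2]
        apply tendsto_const_nhds.congr (fun n => ?_)
        rw [Stmt13Aux.conj_eq]
    · set θ : ℕ → ℝ := fun n => Real.pi - Real.arcsin (-s / (1 + (n:ℝ)^2)) with hθdef
      refine ⟨fun n => gmul (gmul (upperUnipotent (n : ℝ), 0) (Stmt13Aux.rotSL (θ n), 0))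
          (ginv (upperUnipotent (n : ℝ), 0)),
        fun n => ⟨_, Stmt13Aux.mem_Kset_iff.2 ⟨θ n, rfl⟩, rfl⟩, ?_⟩
      rw [Stmt13Aux.tendsto_GG_iff]
      have hψ : Tendsto (fun n : ℕ => Real.arcsin (-s / (1 + (n:ℝ)^2))) atTop (𝓝 0) := by
        simpa [Function.comp_def] using (Real.continuous_arcsin.tendsto 0).comp (Stmt13Aux.tendsto_aux (-s))
      have hsin : Tendsto (fun n => Real.sin (θ n)) atTop (𝓝 0) := by
        simpa [hθdef, Real.sin_pi_sub, Function.comp_def] using (Real.continuous_sin.tendsto 0).comp hψ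
      have hcos : Tendsto (fun n => Real.cos (θ n)) atTop (𝓝 (-1)) := by
        simpa [hθdef, Real.cos_pi_sub] using ((Real.continuous_cos.tendsto 0).comp hψ).neg
      have hev : ∀ᶠ n : ℕ in atTop, Real.sin (θ n) = -s / (1 + (n:ℝ)^2) := by
        filter_upwards [Filter.eventually_ge_atTop ⌈|(-s)|⌉₊] with n hn
        have h1 := Stmt13Aux.abs_le_one (-s) hn
        rw [abs_le] at h1
        rw [hθdef]
        simp only [Real.sin_pi_sub]
        exact Real.sin_arcsin h1.1 h1.2
      have hns : Tendsto (fun n : ℕ => (n:ℝ) * Real.sin (θ n)) atTop (𝓝 0) := by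
        apply (Stmt13Aux.tendsto_aux2 (-s)).congr'
        filter_upwards [hev] with n hn
        rw [hn]
      have h01 : Tendsto (fun n : ℕ => (1 + (n:ℝ)^2) * Real.sin (θ n)) atTop (𝓝 (-s)) := by
        apply tendsto_const_nhds.congr'
        filter_upwards [hev] with n hn
        rw [hn]
        have : (1 : ℝ) + (n:ℝ)^2 ≠ 0 := by positivity
        field_simp
        try ring
      have hcoe : ∀ n : ℕ,
          (((gmul (gmul (upperUnipotent (n : ℝ), 0) (Stmt13Aux.rotSL (θ n), 0))
            (ginv (upperUnipotent (n : ℝ), 0))).1 : Matrix (Fin 2) (Fin 2) ℝ)) =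
          !![Real.cos (θ n) - n * Real.sin (θ n), (1 + (n:ℝ)^2) * Real.sin (θ n);
             -Real.sin (θ n), Real.cos (θ n) + n * Real.sin (θ n)] := fun n => by
        rw [Stmt13Aux.conj_eq]; exact Stmt13Aux.conj_coe _ _
      constructor
      · intro i j
        fin_cases i <;> fin_cases j
        · simp only [hcoe, hmat]
          simpa using hcos.sub hns
        · simp only [hcoe, hmat]
          simpa using h01
        · simp only [hcoe, hmat]
          simpa using hsin.neg
        · simp only [hcoe, hmat]
          simpa using hcos.add hns
      · rw [h2]
        apply tendsto_const_nhds.congr (fun n => ?_)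
        rw [Stmt13Aux.conj_eq]
  · -- part (ii)
    rintro k hk u hu x hx
    choose θ hθm hθv using fun n => (Stmt13Aux.mem_conj_iff.1 (hu n))
    obtain ⟨hE, hv⟩ := Stmt13Aux.tendsto_GG_iff.1 hx
    have hx2 : x.2 = 0 :=
      tendsto_nhds_unique hv (tendsto_const_nhds.congr fun n => (hθv n).symm)
    have h00 : Tendsto (fun n => Real.cos (θ n) - (k n : ℝ) * Real.sin (θ n)) atTop
        (𝓝 ((x.1 : Matrix (Fin 2) (Fin 2) ℝ) 0 0)) :=
      (hE 0 0).congr (fun n => by rw [hθm n]; simp)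
    have h01 : Tendsto (fun n => (1 + (k n : ℝ) ^ 2) * Real.sin (θ n)) atTop
        (𝓝 ((x.1 : Matrix (Fin 2) (Fin 2) ℝ) 0 1)) :=
      (hE 0 1).congr (fun n => by rw [hθm n]; simp)
    have h10 : Tendsto (fun n => -Real.sin (θ n)) atTop
        (𝓝 ((x.1 : Matrix (Fin 2) (Fin 2) ℝ) 1 0)) :=
      (hE 1 0).congr (fun n => by rw [hθm n]; simp)
    have h11 : Tendsto (fun n => Real.cos (θ n) + (k n : ℝ) * Real.sin (θ n)) atTop
        (𝓝 ((x.1 : Matrix (Fin 2) (Fin 2) ℝ) 1 1)) :=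
      (hE 1 1).congr (fun n => by rw [hθm n]; simp)
    set a := (x.1 : Matrix (Fin 2) (Fin 2) ℝ) 0 0 with ha_def
    set b := (x.1 : Matrix (Fin 2) (Fin 2) ℝ) 0 1 with hb_def
    set c := (x.1 : Matrix (Fin 2) (Fin 2) ℝ) 1 0 with hc_def
    set d := (x.1 : Matrix (Fin 2) (Fin 2) ℝ) 1 1 with hd_def
    have hcos : Tendsto (fun n => Real.cos (θ n)) atTop (𝓝 ((a + d) / 2)) :=
      ((h00.add h11).div_const 2).congr (fun n => by ring)
    have hks : Tendsto (fun n => (k n : ℝ) * Real.sin (θ n)) atTop (𝓝 ((d - a) / 2)) :=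
      ((h11.sub h00).div_const 2).congr (fun n => by ring)
    have hkinf : Tendsto (fun n => ((k n : ℕ) : ℝ)) atTop atTop :=
      tendsto_natCast_atTop_atTop.comp hk.tendsto_atTop
    have hsin0 : Tendsto (fun n => Real.sin (θ n)) atTop (𝓝 0) := by
      have h := hks.mul hkinf.inv_tendsto_atTop
      rw [show (d - a) / 2 * 0 = 0 from by ring] at h
      apply h.congr' _
      filter_upwards [Filter.eventually_ge_atTop 1] with n hn
      have hkn : ((k n : ℕ) : ℝ) ≠ 0 := by
        have : 1 ≤ k n := le_trans hn hk.le_apply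
        positivity
      simp only [Pi.inv_apply]
      field_simp
    have hc0 : c = 0 := by
      have : Tendsto (fun n => -Real.sin (θ n)) atTop (𝓝 0) := by simpa using hsin0.neg
      exact tendsto_nhds_unique h10 this
    have hone : ((a + d) / 2) ^ 2 = 1 := by
      have hversion : Tendsto (fun n => Real.cos (θ n) ^ 2 + Real.sin (θ n) ^ 2) atTop
          (𝓝 (((a + d) / 2) ^ 2 + 0 ^ 2)) := (hcos.pow 2).add (hsin0.pow 2)
      have hconst : Tendsto (fun n => Real.cos (θ n) ^ 2 + Real.sin (θ n) ^ 2) atTop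
          (𝓝 1) := tendsto_const_nhds.congr fun n => (Real.cos_sq_add_sin_sq (θ n)).symm
      have := tendsto_nhds_unique hversion hconst
      linear_combination this
    have hdet : a * d - b * c = 1 := by
      rw [ha_def, hb_def, hc_def, hd_def, ← Matrix.det_fin_two]; exact x.1.2
    have hsq : (a - d) ^ 2 = 0 := by linear_combination 4 * hone - 4 * hdet - 4 * b * hc0
    have had : a = d := by
      have h : a - d = 0 := by
        by_contra hne
        exact (pow_ne_zero 2 hne) hsq
      linarith
    exact Stmt13Aux.mem_Ntilde_of hx2 hc0 had

end
end
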